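/- arXiv:1611.08284 — 5 statements merged into one kernel-verified Lean document; each statement's English description precedes it below -/
import Mathlib

section
/- Let m ≥ 1, let 1 ≤ q₁, …, q_m, p, r ≤ ∞ and n ∈ ℕ. Suppose C ≥ 0 is a constant such that for all σ-finite measure spaces, every m-linear operator T : L^{q₁}(μ₁) × ⋯ × L^{q_m}(μ_m) → L^p(ν) bounded with norm at most M, and all families {f^i_{kᵢ}}_{kᵢ=1}^{n} ⊂ L^{qᵢ}(μᵢ) of n functions in each slot, the Marcinkiewicz–Zygmund inequality at exponent r holds with constant C·M. Then for all σ-finite measure spaces (Ω_i',μ_i), (Ω_i,ν_i), all bounded linear operators T_i : L^{qᵢ}(μᵢ) → L^p(νᵢ) with norm at most M_i (i = 1, …, m), and all families {f^i_k}_{k=1}^{n} ⊂ L^{qᵢ}(μᵢ), one has ∏_{i=1}^m ‖(∑_{k=1}^n |T_i(f^i_k)|^r)^{1/r}‖_{L^p(νᵢ)} ≤ C · (∏_{i=1}^m M_i) · ∏_{i=1}^m ‖(∑_{k=1}^n |f^i_k|^r)^{1/r}‖_{L^{qᵢ}(μᵢ)}. -/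
set_option maxHeartbeats 1000000


open MeasureTheory ENNReal Function

noncomputable def lrNorm {ι : Type} [Fintype ι] (r : ℝ≥0∞) (a : ι → ℝ) : ℝ :=
  if r = ∞ then ⨆ k, |a k| else (∑ k, |a k| ^ r.toReal) ^ (1 / r.toReal)

/-- A map `T` on (representatives of) functions which is, in the almost-everywhere sense,
an `m`-linear operator `L^{q₁}(μ₁) × ⋯ × L^{q_m}(μ_m) → L^p(ν)` bounded with norm at most `M`. -/
structure IsBddMultilinear {m : ℕ} {Ω : Fin m → Type} [∀ i, MeasurableSpace (Ω i)]
    (μ : ∀ i, Measure (Ω i)) {Ω' : Type} [MeasurableSpace Ω'] (ν : Measure Ω')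
    (q : Fin m → ℝ≥0∞) (p : ℝ≥0∞)
    (T : (∀ i, Ω i → ℝ) → Ω' → ℝ) (M : ℝ) : Prop where
  congr : ∀ f g : ∀ i, Ω i → ℝ, (∀ j, MemLp (f j) (q j) (μ j)) →
      (∀ j, MemLp (g j) (q j) (μ j)) → (∀ j, f j =ᵐ[μ j] g j) → T f =ᵐ[ν] T g
  multilinear : ∀ (f : ∀ i, Ω i → ℝ), (∀ j, MemLp (f j) (q j) (μ j)) →
      ∀ (i : Fin m) (c : ℝ) (g h : Ω i → ℝ), MemLp g (q i) (μ i) → MemLp h (q i) (μ i) →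
        T (update f i fun x => c * g x + h x) =ᵐ[ν]
          fun ω => c * T (update f i g) ω + T (update f i h) ω
  memℒp : ∀ f : ∀ i, Ω i → ℝ, (∀ j, MemLp (f j) (q j) (μ j)) → MemLp (T f) p ν
  bound : ∀ f : ∀ i, Ω i → ℝ, (∀ j, MemLp (f j) (q j) (μ j)) →
      eLpNorm (T f) p ν ≤ ENNReal.ofReal M * ∏ i, eLpNorm (f i) (q i) (μ i)

/-- The Marcinkiewicz–Zygmund inequality at exponent `r` with constant `K` for the operator `T`
and the finite families `f i (kᵢ)`, `kᵢ = 1, …, n i`. -/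
noncomputable def MZineq {m : ℕ} {Ω : Fin m → Type} [∀ i, MeasurableSpace (Ω i)]
    (μ : ∀ i, Measure (Ω i)) {Ω' : Type} [MeasurableSpace Ω'] (ν : Measure Ω')
    (q : Fin m → ℝ≥0∞) (p r : ℝ≥0∞)
    (T : (∀ i, Ω i → ℝ) → Ω' → ℝ) (K : ℝ)
    (n : Fin m → ℕ) (f : ∀ i, Fin (n i) → Ω i → ℝ) : Prop :=
  eLpNorm (fun ω => lrNorm r fun k : ∀ i, Fin (n i) => T (fun i => f i (k i)) ω) p ν
    ≤ ENNReal.ofReal K *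
      ∏ i, eLpNorm (fun x => lrNorm r fun kᵢ : Fin (n i) => f i kᵢ x) (q i) (μ i)

/-- The triple `(q, p, r)` satisfies the (m-linear) Marcinkiewicz–Zygmund inequality
with constant `C`: for all σ-finite measure spaces, every bounded multilinear operator with
norm at most `M`, and all finite families in each slot, the MZ inequality holds with `C * M`. -/
def MZprop (m : ℕ) (q : Fin m → ℝ≥0∞) (p r : ℝ≥0∞) (C : ℝ) : Prop :=
  ∀ (Ω : Fin m → Type) [∀ i, MeasurableSpace (Ω i)] (μ : ∀ i, Measure (Ω i))
    [∀ i, SigmaFinite (μ i)]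
    (Ω' : Type) [MeasurableSpace Ω'] (ν : Measure Ω') [SigmaFinite ν]
    (T : (∀ i, Ω i → ℝ) → Ω' → ℝ) (M : ℝ), 0 ≤ M →
    IsBddMultilinear μ ν q p T M →
    ∀ (n : Fin m → ℕ) (f : ∀ i, Fin (n i) → Ω i → ℝ),
      (∀ i kᵢ, MemLp (f i kᵢ) (q i) (μ i)) →
      MZineq μ ν q p r T (C * M) n f

/-- A map `S` on (representatives of) functions which is, in the almost-everywhere sense,
a linear operator `L^q(μ) → L^p(ν)` bounded with norm at most `M`. -/
structure IsBddLinear {Ω : Type} [MeasurableSpace Ω] (μ : Measure Ω)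
    {Ω' : Type} [MeasurableSpace Ω'] (ν : Measure Ω')
    (q p : ℝ≥0∞) (S : (Ω → ℝ) → Ω' → ℝ) (M : ℝ) : Prop where
  congr : ∀ f g : Ω → ℝ, MemLp f q μ → MemLp g q μ → f =ᵐ[μ] g → S f =ᵐ[ν] S g
  linear : ∀ (c : ℝ) (g h : Ω → ℝ), MemLp g q μ → MemLp h q μ →
    S (fun x => c * g x + h x) =ᵐ[ν] fun ω => c * S g ω + S h ω
  memℒp : ∀ f : Ω → ℝ, MemLp f q μ → MemLp (S f) p ν
  bound : ∀ f : Ω → ℝ, MemLp f q μ →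
    eLpNorm (S f) p ν ≤ ENNReal.ofReal M * eLpNorm f q μ

/-- The `n`-restricted multilinear Marcinkiewicz–Zygmund property: the MZ inequality holds
with constant `C * M` for every bounded multilinear operator (with norm at most `M`) and all
families of `n` functions in each slot. -/
def MZpropN (m : ℕ) (q : Fin m → ℝ≥0∞) (p r : ℝ≥0∞) (C : ℝ) (n : ℕ) : Prop :=
  ∀ (Ω : Fin m → Type) [∀ i, MeasurableSpace (Ω i)] (μ : ∀ i, Measure (Ω i))
    [∀ i, SigmaFinite (μ i)]
    (Ω' : Type) [MeasurableSpace Ω'] (ν : Measure Ω') [SigmaFinite ν]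
    (T : (∀ i, Ω i → ℝ) → Ω' → ℝ) (M : ℝ), 0 ≤ M →
    IsBddMultilinear μ ν q p T M →
    ∀ f : ∀ i, Fin n → Ω i → ℝ, (∀ i k, MemLp (f i k) (q i) (μ i)) →
      MZineq μ ν q p r T (C * M) (fun _ => n) f

section AuxEssSup

variable {α β : Type*} [MeasurableSpace α] [MeasurableSpace β]

lemma aux_mul_essSup_le {ν : Measure β} {G : β → ℝ≥0∞} {c a : ℝ≥0∞}
    (h : ∀ᵐ y ∂ν, c * G y ≤ a) : c * essSup G ν ≤ a := by
  rcases eq_or_ne a ∞ with rfl | ha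
  · exact le_top
  rcases eq_or_ne c 0 with rfl | hc
  · simpa using zero_le a
  rcases eq_or_ne c ∞ with rfl | hct
  · have hG : ∀ᵐ y ∂ν, G y ≤ 0 := by
      filter_upwards [h] with y hy
      by_contra hy0
      rw [ENNReal.top_mul (by simpa using hy0)] at hy
      exact ha (top_le_iff.mp hy)
    have h0 : essSup G ν = 0 := le_zero_iff.mp (essSup_le_of_ae_le 0 hG)
    simp [h0]
  · have h2 : ∀ᵐ y ∂ν, G y ≤ a / c := by
      filter_upwards [h] with y hy
      rw [ENNReal.le_div_iff_mul_le (Or.inl hc) (Or.inl hct), mul_comm]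
      exact hy
    calc c * essSup G ν ≤ c * (a / c) :=
          mul_le_mul_right (essSup_le_of_ae_le _ h2) c
      _ ≤ a := ENNReal.mul_div_le

lemma aux_essSup_prod_mul (μ : Measure α) (ν : Measure β) [SFinite μ] [SFinite ν]
    (F : α → ℝ≥0∞) (G : β → ℝ≥0∞) :
    essSup (fun z : α × β => F z.1 * G z.2) (μ.prod ν) = essSup F μ * essSup G ν := by
  apply le_antisymm
  · refine essSup_le_of_ae_le _ ?_
    filter_upwards [Measure.quasiMeasurePreserving_fst.tendsto_ae.eventually
        (ae_le_essSup F), Measure.quasiMeasurePreserving_snd.tendsto_ae.eventually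
        (ae_le_essSup G)] with z h1 h2
    exact mul_le_mul' h1 h2
  · rw [mul_comm]
    refine aux_mul_essSup_le ?_
    filter_upwards [Measure.ae_ae_of_ae_prod
      (ae_le_essSup (μ := μ.prod ν) (fun z : α × β => F z.1 * G z.2))] with x hx
    rw [mul_comm]
    exact aux_mul_essSup_le hx

lemma aux_eLpNorm_prod_mul {μ : Measure α} {ν : Measure β} [SFinite μ] [SFinite ν]
    {f : α → ℝ} {g : β → ℝ} (hf : AEStronglyMeasurable f μ) (hg : AEStronglyMeasurable g ν)
    {p : ℝ≥0∞} (hp : p ≠ 0) :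
    eLpNorm (fun z : α × β => f z.1 * g z.2) p (μ.prod ν) = eLpNorm f p μ * eLpNorm g p ν := by
  rcases eq_or_ne p ∞ with rfl | hpt
  · rw [eLpNorm_exponent_top, eLpNorm_exponent_top, eLpNorm_exponent_top]
    show essSup (fun z : α × β => (‖f z.1 * g z.2‖₊ : ℝ≥0∞)) (μ.prod ν) = _
    simp_rw [nnnorm_mul, ENNReal.coe_mul]
    exact aux_essSup_prod_mul μ ν (fun x => (‖f x‖₊ : ℝ≥0∞)) (fun y => (‖g y‖₊ : ℝ≥0∞))
  · rw [eLpNorm_eq_lintegral_rpow_enorm_toReal hp hpt, eLpNorm_eq_lintegral_rpow_enorm_toReal hp hpt,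
      eLpNorm_eq_lintegral_rpow_enorm_toReal hp hpt]
    have hpr0 : (0:ℝ) ≤ p.toReal := ENNReal.toReal_nonneg
    have h1 : ∀ z : α × β, ‖f z.1 * g z.2‖ₑ ^ p.toReal
        = ‖f z.1‖ₑ ^ p.toReal * ‖g z.2‖ₑ ^ p.toReal := by
      intro z; rw [enorm_mul, ENNReal.mul_rpow_of_nonneg _ _ hpr0]
    simp_rw [h1]
    rw [lintegral_prod_mul (hf.enorm.pow_const p.toReal) (hg.enorm.pow_const p.toReal),
      ENNReal.mul_rpow_of_nonneg _ _ (by positivity : (0:ℝ) ≤ 1 / p.toReal)]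

end AuxEssSup

lemma aux_qmp_eval {m : ℕ} {Ω : Fin m → Type} [∀ i, MeasurableSpace (Ω i)]
    (ν : ∀ i, Measure (Ω i)) [∀ i, SigmaFinite (ν i)] (i : Fin m) :
    Measure.QuasiMeasurePreserving (Function.eval i) (Measure.pi ν) (ν i) :=
  ⟨measurable_pi_apply i, Measure.AbsolutelyContinuous.mk fun s hs h0 => by
    rw [Measure.map_apply (measurable_pi_apply i) hs]
    exact Measure.pi_eval_preimage_null ν h0⟩

lemma aux_eLpNorm_pi_prod :
    ∀ (m : ℕ) (Ω : Fin m → Type) (_ : ∀ i, MeasurableSpace (Ω i))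
      (ν : ∀ i, Measure (Ω i)) (_ : ∀ i, SigmaFinite (ν i)) (ψ : ∀ i, Ω i → ℝ),
      (∀ i, AEStronglyMeasurable (ψ i) (ν i)) → ∀ (p : ℝ≥0∞), p ≠ 0 →
      eLpNorm (fun ω : ∀ i, Ω i => ∏ i, ψ i (ω i)) p (Measure.pi ν)
        = ∏ i, eLpNorm (ψ i) p (ν i) := by
  intro m
  induction m with
  | zero =>
    intro Ω inst ν inst2 ψ hψ p hp
    have h1 : (fun ω : ∀ i, Ω i => ∏ i, ψ i (ω i)) = fun _ => (1:ℝ) := by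
      funext ω; simp
    have hν : Measure.pi ν ≠ 0 := by
      intro h
      have h2 := Measure.pi_empty_univ ν
      rw [h] at h2; simp at h2
    rw [h1, eLpNorm_const _ hp hν]
    simp
  | succ m ih =>
    intro Ω inst ν inst2 ψ hψ p hp
    have mp := measurePreserving_piFinSuccAbove ν 0
    set νt : ∀ j : Fin m, Measure (Ω ((0 : Fin (m+1)).succAbove j)) :=
      fun j => ν ((0 : Fin (m+1)).succAbove j) with hνt
    have htail : AEStronglyMeasurable
        (fun y : ∀ j, Ω ((0 : Fin (m+1)).succAbove j) =>
          ∏ j, ψ ((0 : Fin (m+1)).succAbove j) (y j)) (Measure.pi νt) := by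
      apply Finset.aestronglyMeasurable_fun_prod
      intro j _
      exact (hψ _).comp_quasiMeasurePreserving (aux_qmp_eval νt j)
    have hG : AEStronglyMeasurable
        (fun z : Ω 0 × ∀ j, Ω ((0 : Fin (m+1)).succAbove j) =>
          ψ 0 z.1 * ∏ j, ψ ((0 : Fin (m+1)).succAbove j) (z.2 j))
        ((ν 0).prod (Measure.pi νt)) :=
      ((hψ 0).comp_quasiMeasurePreserving Measure.quasiMeasurePreserving_fst).mul
        (htail.comp_quasiMeasurePreserving Measure.quasiMeasurePreserving_snd)
    have hcomp : eLpNorm (fun ω : ∀ i, Ω i => ∏ i, ψ i (ω i)) p (Measure.pi ν)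
        = eLpNorm (fun z : Ω 0 × ∀ j, Ω ((0 : Fin (m+1)).succAbove j) =>
            ψ 0 z.1 * ∏ j, ψ ((0 : Fin (m+1)).succAbove j) (z.2 j)) p
            ((ν 0).prod (Measure.pi νt)) := by
      rw [← eLpNorm_comp_measurePreserving hG mp]
      congr 1
      funext ω
      show ∏ i, ψ i (ω i) = ψ 0 _ * ∏ j, ψ ((0 : Fin (m+1)).succAbove j) _
      rw [Fin.prod_univ_succAbove (fun i => ψ i (ω i)) 0]
      rfl
    rw [hcomp, aux_eLpNorm_prod_mul (hψ 0) htail hp,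
      ih _ _ νt (fun j => inst2 _) _ (fun j => hψ _) p hp,
      Fin.prod_univ_succAbove (fun i => eLpNorm (ψ i) p (ν i)) 0]

lemma aux_sup_prod {m n : ℕ} (b : Fin m → Fin n → ℝ) (hb : ∀ i j, 0 ≤ b i j) :
    ⨆ k : Fin m → Fin n, ∏ i, b i (k i) = ∏ i, ⨆ j, b i j := by
  rcases Nat.eq_zero_or_pos n with rfl | hn
  · rcases Nat.eq_zero_or_pos m with rfl | hm
    · haveI : Nonempty (Fin 0 → Fin 0) := ⟨fun i => i⟩
      simp [ciSup_const]
    · haveI : Nonempty (Fin m) := ⟨⟨0, hm⟩⟩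
      haveI : IsEmpty (Fin m → Fin 0) := by infer_instance
      rw [Real.iSup_of_isEmpty]
      refine (Finset.prod_eq_zero (Finset.mem_univ ⟨0, hm⟩) ?_).symm
      exact Real.iSup_of_isEmpty _
  · haveI : Nonempty (Fin n) := ⟨⟨0, hn⟩⟩
    apply le_antisymm
    · refine ciSup_le fun k => ?_
      exact Finset.prod_le_prod (fun i _ => hb i (k i))
        (fun i _ => le_ciSup (Set.Finite.bddAbove (Set.finite_range _)) (k i))
    · have hmax : ∀ i, ∃ j, ∀ j', b i j' ≤ b i j := fun i => Finite.exists_max (b i)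
      choose ks hks using hmax
      calc ∏ i, ⨆ j, b i j ≤ ∏ i, b i (ks i) :=
            Finset.prod_le_prod (fun i _ => Real.iSup_nonneg (fun j => hb i j))
              (fun i _ => ciSup_le (hks i))
        _ ≤ ⨆ k : Fin m → Fin n, ∏ i, b i (k i) :=
            le_ciSup (f := fun k : Fin m → Fin n => ∏ i, b i (k i))
              (Set.Finite.bddAbove (Set.finite_range _)) ks

lemma aux_lrNorm_prod {m n : ℕ} {r : ℝ≥0∞} (hr : 1 ≤ r) (a : Fin m → Fin n → ℝ) :
    lrNorm r (fun k : Fin m → Fin n => ∏ i, a i (k i)) = ∏ i, lrNorm r (a i) := by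
  rcases eq_or_ne r ∞ with rfl | hrt
  · simp only [lrNorm, if_pos rfl]
    simp_rw [Finset.abs_prod]
    exact aux_sup_prod (fun i j => |a i j|) (fun _ _ => abs_nonneg _)
  · simp only [lrNorm, if_neg hrt]
    have h1 : ∀ k : Fin m → Fin n, |∏ i, a i (k i)| ^ r.toReal
        = ∏ i, |a i (k i)| ^ r.toReal := by
      intro k
      rw [Finset.abs_prod, ← Real.finset_prod_rpow _ _ (fun i _ => abs_nonneg _)]
    simp_rw [h1]
    rw [← Fintype.prod_sum (fun i (j : Fin n) => |a i j| ^ r.toReal),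
      Real.finset_prod_rpow _ _
        (fun i _ => Finset.sum_nonneg fun j _ => Real.rpow_nonneg (abs_nonneg _) _)
        (1 / r.toReal)]

lemma aux_aesm_lrNorm {Ω : Type} [MeasurableSpace Ω] {ν : Measure Ω} {n : ℕ} (r : ℝ≥0∞)
    (g : Fin n → Ω → ℝ) (hg : ∀ k, AEStronglyMeasurable (g k) ν) :
    AEStronglyMeasurable (fun x => lrNorm r fun k => g k x) ν := by
  have habs : ∀ k, AEMeasurable (fun x => |g k x|) ν := by
    intro k
    simpa [Real.norm_eq_abs] using (hg k).norm.aemeasurable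
  rcases eq_or_ne r ∞ with rfl | hrt
  · simp only [lrNorm, if_pos rfl]
    rw [aestronglyMeasurable_iff_aemeasurable]
    exact AEMeasurable.iSup habs
  · simp only [lrNorm, if_neg hrt]
    rw [aestronglyMeasurable_iff_aemeasurable]
    exact (Finset.aemeasurable_fun_sum _ (fun k _ => (habs k).pow_const _)).pow_const _

/-- If the `m`-linear Marcinkiewicz–Zygmund inequality (for families of `n`
functions per slot) holds with uniform constant `C`, then the corresponding product inequality
holds for any `m`-tuple of bounded linear operators. -/
theorem statement2 (m : ℕ) (hm : 1 ≤ m) (q : Fin m → ℝ≥0∞) (hq : ∀ i, 1 ≤ q i)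
    (p r : ℝ≥0∞) (hp : 1 ≤ p) (hr : 1 ≤ r) (n : ℕ) (C : ℝ) (hC : 0 ≤ C)
    (hMZ : MZpropN m q p r C n) :
    ∀ (Ω' : Fin m → Type) [∀ i, MeasurableSpace (Ω' i)] (μ : ∀ i, Measure (Ω' i))
      [∀ i, SigmaFinite (μ i)]
      (Ω : Fin m → Type) [∀ i, MeasurableSpace (Ω i)] (ν : ∀ i, Measure (Ω i))
      [∀ i, SigmaFinite (ν i)]
      (T : ∀ i, (Ω' i → ℝ) → Ω i → ℝ) (M : Fin m → ℝ),
      (∀ i, 0 ≤ M i) →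
      (∀ i, IsBddLinear (μ i) (ν i) (q i) p (T i) (M i)) →
      ∀ f : ∀ i, Fin n → Ω' i → ℝ, (∀ i k, MemLp (f i k) (q i) (μ i)) →
      ∏ i, eLpNorm (fun x => lrNorm r fun k : Fin n => T i (f i k) x) p (ν i)
        ≤ ENNReal.ofReal (C * ∏ i, M i) *
          ∏ i, eLpNorm (fun x => lrNorm r fun k : Fin n => f i k x) (q i) (μ i) := by
  intro Ω' _ μ _ Ω _ ν _ T M hM hT f hf
  classical
  have hp0 : p ≠ 0 := by
    intro h; rw [h] at hp; simp at hp
  set S : (∀ i, Ω' i → ℝ) → (∀ i, Ω i) → ℝ := fun g ω => ∏ i, T i (g i) (ω i) with hSdef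
  have hS : IsBddMultilinear μ (Measure.pi ν) q p S (∏ i, M i) := by
    constructor
    · intro g h hg hh hgh
      have h1 : ∀ i, T i (g i) =ᵐ[ν i] T i (h i) :=
        fun i => (hT i).congr _ _ (hg i) (hh i) (hgh i)
      have h2 : ∀ᵐ ω ∂Measure.pi ν, ∀ i, T i (g i) (ω i) = T i (h i) (ω i) := by
        rw [ae_all_iff]
        intro i
        exact Measure.tendsto_eval_ae_ae.eventually (h1 i)
      filter_upwards [h2] with ω hω
      exact Finset.prod_congr rfl fun i _ => hω i
    · intro g hg i c u v hu hv
      have hlin := (hT i).linear c u v hu hv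
      have h2 : ∀ᵐ ω ∂Measure.pi ν,
          T i (fun x => c * u x + v x) (ω i) = c * T i u (ω i) + T i v (ω i) :=
        Measure.tendsto_eval_ae_ae.eventually hlin
      have key : ∀ (w : Ω' i → ℝ) (ω : ∀ j, Ω j),
          S (update g i w) ω
            = T i w (ω i) * ∏ j ∈ Finset.univ \ {i}, T j (g j) (ω j) := by
        intro w ω
        have e1 : (fun j => T j (update g i w j) (ω j))
            = update (fun j => T j (g j) (ω j)) i (T i w (ω i)) := by
          funext j
          rcases eq_or_ne j i with rfl | hj
          · simp
          · simp [update_of_ne hj]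
        show (∏ j, T j (update g i w j) (ω j)) = _
        calc (∏ j, T j (update g i w j) (ω j))
            = ∏ j, update (fun j => T j (g j) (ω j)) i (T i w (ω i)) j := by rw [e1]
          _ = _ := Finset.prod_update_of_mem (Finset.mem_univ i) _ _
      filter_upwards [h2] with ω hω
      rw [key, key, key, hω]
      ring
    · intro g hg
      have hTg : ∀ i, MemLp (T i (g i)) p (ν i) := fun i => (hT i).memℒp _ (hg i)
      have heq := aux_eLpNorm_pi_prod m Ω _ ν (fun i => inferInstance) (fun i => T i (g i))
        (fun i => (hTg i).aestronglyMeasurable) p hp0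
      constructor
      · exact Finset.aestronglyMeasurable_fun_prod _ fun i _ =>
          (hTg i).aestronglyMeasurable.comp_quasiMeasurePreserving (aux_qmp_eval ν i)
      · show eLpNorm (fun ω => ∏ i, T i (g i) (ω i)) p (Measure.pi ν) < ∞
        rw [heq]
        exact ENNReal.prod_lt_top fun i _ => (hTg i).2
    · intro g hg
      have hTg : ∀ i, MemLp (T i (g i)) p (ν i) := fun i => (hT i).memℒp _ (hg i)
      have heq := aux_eLpNorm_pi_prod m Ω _ ν (fun i => inferInstance) (fun i => T i (g i))
        (fun i => (hTg i).aestronglyMeasurable) p hp0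
      show eLpNorm (fun ω => ∏ i, T i (g i) (ω i)) p (Measure.pi ν) ≤ _
      rw [heq]
      calc ∏ i, eLpNorm (T i (g i)) p (ν i)
          ≤ ∏ i, (ENNReal.ofReal (M i) * eLpNorm (g i) (q i) (μ i)) :=
            Finset.prod_le_prod' fun i _ => (hT i).bound _ (hg i)
        _ = (∏ i, ENNReal.ofReal (M i)) * ∏ i, eLpNorm (g i) (q i) (μ i) :=
            Finset.prod_mul_distrib
        _ = ENNReal.ofReal (∏ i, M i) * ∏ i, eLpNorm (g i) (q i) (μ i) := by
            rw [ENNReal.ofReal_prod_of_nonneg (fun i _ => hM i)]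
  have hmz := hMZ Ω' μ (∀ i, Ω i) (Measure.pi ν) S (∏ i, M i)
    (Finset.prod_nonneg fun i _ => hM i) hS f hf
  have hmz' : eLpNorm (fun ω => lrNorm r fun k : ∀ _ : Fin m, Fin n =>
        S (fun i => f i (k i)) ω) p (Measure.pi ν)
      ≤ ENNReal.ofReal (C * ∏ i, M i) *
        ∏ i, eLpNorm (fun x => lrNorm r fun kᵢ : Fin n => f i kᵢ x) (q i) (μ i) := hmz
  have hψ : ∀ i, AEStronglyMeasurable
      (fun x => lrNorm r fun kᵢ : Fin n => T i (f i kᵢ) x) (ν i) :=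
    fun i => aux_aesm_lrNorm r _ (fun k => ((hT i).memℒp _ (hf i k)).aestronglyMeasurable)
  have heq2 := aux_eLpNorm_pi_prod m Ω _ ν (fun i => inferInstance)
    (fun i => fun x => lrNorm r fun kᵢ : Fin n => T i (f i kᵢ) x) hψ p hp0
  have hfun : (fun ω : ∀ i, Ω i => lrNorm r fun k : ∀ _ : Fin m, Fin n =>
        S (fun i => f i (k i)) ω)
      = fun ω => ∏ i, lrNorm r (fun kᵢ : Fin n => T i (f i kᵢ) (ω i)) := by
    funext ω
    exact aux_lrNorm_prod hr (fun i kᵢ => T i (f i kᵢ) (ω i))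
  calc ∏ i, eLpNorm (fun x => lrNorm r fun k : Fin n => T i (f i k) x) p (ν i)
      = eLpNorm (fun ω : ∀ i, Ω i =>
          ∏ i, lrNorm r (fun kᵢ : Fin n => T i (f i kᵢ) (ω i))) p (Measure.pi ν) := heq2.symm
    _ = eLpNorm (fun ω : ∀ i, Ω i => lrNorm r fun k : ∀ _ : Fin m, Fin n =>
          S (fun i => f i (k i)) ω) p (Measure.pi ν) := by rw [hfun]
    _ ≤ _ := hmz'
end

section
/- Let m ≥ 1, let 1 ≤ q₁, …, q_m ≤ ∞, let 1 ≤ r ≤ ∞, let n ∈ ℕ, and let 1 ≤ p₂ < p₁ ≤ ∞. Suppose C ≥ 0 is a constant such that for all σ-finite measure spaces, every m-linear operator T : L^{q₁}(μ₁) × ⋯ × L^{q_m}(μ_m) → L^{p₂}(ν) bounded with norm at most M, and all families of n functions {f^i_{kᵢ}}_{kᵢ=1}^{n} ⊂ L^{qᵢ}(μᵢ), the Marcinkiewicz–Zygmund inequality at exponent r (with target exponent p₂) holds with constant C·M. Then the same constant C works with target exponent p₁: for all σ-finite measure spaces, every m-linear operator T : L^{q₁}(μ₁) × ⋯ × L^{q_m}(μ_m)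 → L^{p₁}(ν) bounded with norm at most M, and all families of n functions {f^i_{kᵢ}}_{kᵢ=1}^{n} ⊂ L^{qᵢ}(μᵢ), the Marcinkiewicz–Zygmund inequality at exponent r holds with constant C·M. -/
open MeasureTheory ENNReal Function

section aux

variable {ι : Type} [Fintype ι]

lemma lrNorm_nonneg (r : ℝ≥0∞) (a : ι → ℝ) : 0 ≤ lrNorm r a := by
  unfold lrNorm
  split
  · exact Real.iSup_nonneg fun k => abs_nonneg _
  · exact Real.rpow_nonneg
      (Finset.sum_nonneg fun k _ => Real.rpow_nonneg (abs_nonneg _) _) _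

lemma lrNorm_const_mul {r : ℝ≥0∞} (hr : 1 ≤ r) (c : ℝ) (hc : 0 ≤ c) (a : ι → ℝ) :
    lrNorm r (fun k => c * a k) = c * lrNorm r a := by
  unfold lrNorm
  split
  · simp_rw [abs_mul, abs_of_nonneg hc]
    exact (Real.mul_iSup_of_nonneg hc _).symm
  · rename_i hrt
    have ht : 0 < r.toReal := ENNReal.toReal_pos (zero_lt_one.trans_le hr).ne' hrt
    simp_rw [abs_mul, abs_of_nonneg hc, Real.mul_rpow hc (abs_nonneg _), ← Finset.mul_sum]
    rw [Real.mul_rpow (Real.rpow_nonneg hc _)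
        (Finset.sum_nonneg fun k _ => Real.rpow_nonneg (abs_nonneg _) _),
      ← Real.rpow_mul hc, mul_one_div_cancel ht.ne', Real.rpow_one]

lemma lrNorm_le_sum {r : ℝ≥0∞} (hr : 1 ≤ r) (a : ι → ℝ) :
    lrNorm r a ≤ ∑ k, |a k| := by
  unfold lrNorm
  split
  · rcases isEmpty_or_nonempty ι with h | h
    · simp [Real.iSup_of_isEmpty]
    · exact ciSup_le fun k =>
        Finset.single_le_sum (fun k _ => abs_nonneg (a k)) (Finset.mem_univ k)
  · rename_i hrt
    have ht1 : 1 ≤ r.toReal := by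
      rw [← ENNReal.toReal_one]
      exact ENNReal.toReal_mono hrt hr
    have ht : 0 < r.toReal := zero_lt_one.trans_le ht1
    set t := r.toReal with htdef
    set S := ∑ k, |a k| with hS
    have hS0 : 0 ≤ S := Finset.sum_nonneg fun k _ => abs_nonneg _
    have key : ∑ k, |a k| ^ t ≤ S ^ t := by
      have step : ∀ k : ι, |a k| ^ t ≤ |a k| * S ^ (t - 1) := by
        intro k
        have h1 : |a k| ^ t = |a k| * |a k| ^ (t - 1) := by
          nth_rewrite 1 [show t = 1 + (t - 1) by ring]
          rw [Real.rpow_add' (abs_nonneg _) (by simpa using ht.ne'), Real.rpow_one]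
        rw [h1]
        apply mul_le_mul_of_nonneg_left _ (abs_nonneg _)
        exact Real.rpow_le_rpow (abs_nonneg _)
          (Finset.single_le_sum (fun k _ => abs_nonneg (a k)) (Finset.mem_univ k))
          (by linarith)
      calc ∑ k, |a k| ^ t ≤ ∑ k, |a k| * S ^ (t - 1) := Finset.sum_le_sum fun k _ => step k
        _ = S * S ^ (t - 1) := by rw [← Finset.sum_mul]
        _ = S ^ t := by
            nth_rewrite 2 [show t = 1 + (t - 1) by ring]
            rw [Real.rpow_add' hS0 (by simpa using ht.ne'), Real.rpow_one]
    calc (∑ k, |a k| ^ t) ^ (1 / t) ≤ (S ^ t) ^ (1 / t) :=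
          Real.rpow_le_rpow (Finset.sum_nonneg fun k _ => Real.rpow_nonneg (abs_nonneg _) _)
            key (by positivity)
      _ = S := by rw [← Real.rpow_mul hS0, mul_one_div_cancel ht.ne', Real.rpow_one]

lemma lrNorm_measurable {Ω : Type} [MeasurableSpace Ω] (r : ℝ≥0∞) (a : ι → Ω → ℝ)
    (ha : ∀ k, Measurable (a k)) :
    Measurable fun ω => lrNorm r fun k => a k ω := by
  unfold lrNorm
  split
  · exact Measurable.iSup fun k => (ha k).abs
  · apply ((Real.continuous_rpow_const (by positivity)).measurable).comp
    exact Finset.measurable_sum _ fun k _ =>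
      ((Real.continuous_rpow_const ENNReal.toReal_nonneg).measurable).comp (ha k).abs

lemma eLpNorm_lrNorm_le {Ω : Type} [MeasurableSpace Ω] (ν : Measure Ω) {p r : ℝ≥0∞}
    (hr : 1 ≤ r) (hp : 1 ≤ p) (a : ι → Ω → ℝ)
    (ha : ∀ k, AEStronglyMeasurable (a k) ν) :
    eLpNorm (fun ω => lrNorm r fun k => a k ω) p ν ≤ ∑ k, eLpNorm (a k) p ν := by
  calc eLpNorm (fun ω => lrNorm r fun k => a k ω) p ν
      ≤ eLpNorm (∑ k : ι, fun ω => |a k ω|) p ν := by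
        apply eLpNorm_mono_real
        intro ω
        rw [Real.norm_eq_abs, abs_of_nonneg (lrNorm_nonneg _ _)]
        simpa [Finset.sum_apply] using lrNorm_le_sum hr (fun k => a k ω)
    _ ≤ ∑ k, eLpNorm (fun ω => |a k ω|) p ν :=
        eLpNorm_sum_le (fun k _ => by simpa [Real.norm_eq_abs] using (ha k).norm) hp
    _ = ∑ k, eLpNorm (a k) p ν := by
        refine Finset.sum_congr rfl fun k _ => ?_
        simpa [Real.norm_eq_abs] using eLpNorm_norm (a k)

end aux
section key
open MeasureTheory ENNReal

lemma key_lemma {Ω' : Type} [MeasurableSpace Ω'] (ν : Measure Ω') [SigmaFinite ν]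
    {p₁ p₂ s : ℝ≥0∞} (hp₂ : 1 ≤ p₂) (hpp : p₂ < p₁) (hs : 1 / p₂ = 1 / s + 1 / p₁)
    {G : Ω' → ℝ} (hGm : Measurable G) (hG0 : ∀ ω, 0 ≤ G ω)
    (hGfin : eLpNorm G p₁ ν ≠ ∞) {R : ℝ≥0∞} (hR : R ≠ ∞)
    (hw : ∀ w : Ω' → ℝ, Measurable w → (∀ ω, 0 ≤ w ω) → eLpNorm w s ν ≤ 1 →
        eLpNorm (fun ω => w ω * G ω) p₂ ν ≤ R) :
    eLpNorm G p₁ ν ≤ R := by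
  have hp₂0 : p₂ ≠ 0 := (zero_lt_one.trans_le hp₂).ne'
  have hp₂t : p₂ ≠ ∞ := (hpp.trans_le le_top).ne
  have hpt₂ : 0 < p₂.toReal := ENNReal.toReal_pos hp₂0 hp₂t
  simp only [one_div] at hs
  rcases eq_or_ne p₁ ∞ with hp₁ | hp₁
  · -- p₁ = ∞
    subst hp₁
    have hsp : s = p₂ := by
      have h1 : p₂⁻¹ = s⁻¹ := by simpa using hs
      rw [← inv_inv s, ← h1, inv_inv]
    rw [hsp] at hw
    rw [eLpNorm_exponent_top]
    by_contra hcon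
    push_neg at hcon
    obtain ⟨t, hRt, hte⟩ := exists_between hcon
    set A := {ω | t < (‖G ω‖₊ : ℝ≥0∞)} with hA
    have hAm : MeasurableSet A := measurableSet_lt measurable_const hGm.enorm
    have hνA : 0 < ν A := by
      rcases eq_or_ne (ν A) 0 with h0 | h0
      · exfalso
        have hae : (fun ω => (‖G ω‖₊ : ℝ≥0∞)) ≤ᵐ[ν] fun _ => t := by
          rw [Filter.EventuallyLE, ae_iff]
          simpa [A, not_le] using h0
        have : eLpNormEssSup G ν ≤ t := essSup_le_of_ae_le t hae
        exact absurd (hte.trans_le this) (lt_irrefl t)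
      · exact h0.bot_lt
    obtain ⟨B, hBm, hBA, hB0, hBfin⟩ := MeasureTheory.Measure.exists_subset_measure_lt_top hAm hνA
    have hrB0 : ν B ^ (1 / p₂.toReal) ≠ 0 := by
      simp [ENNReal.rpow_eq_zero_iff, hB0.ne', hBfin.ne, hpt₂, one_div]
    have hrBt : ν B ^ (1 / p₂.toReal) ≠ ∞ := by
      simp [ENNReal.rpow_eq_top_iff, hB0.ne', hBfin.ne, hpt₂, one_div]
    set cE : ℝ≥0∞ := (ν B ^ (1 / p₂.toReal))⁻¹ with hcE
    have hcEt : cE ≠ ∞ := by simpa [cE] using hrB0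
    set c : ℝ := cE.toReal with hcdef
    have hc0 : 0 ≤ c := ENNReal.toReal_nonneg
    have hcc : ‖c‖ₑ = cE := by
      rw [Real.enorm_eq_ofReal hc0, ENNReal.ofReal_toReal hcEt]
    have hnorm1 : cE * ν B ^ (1 / p₂.toReal) = 1 := ENNReal.inv_mul_cancel hrB0 hrBt
    set w : Ω' → ℝ := B.indicator fun _ => c with hwdef
    have hwm : Measurable w := measurable_const.indicator hBm
    have hw0 : ∀ ω, 0 ≤ w ω := fun ω => Set.indicator_nonneg (fun _ _ => hc0) ω
    have hws : eLpNorm w p₂ ν ≤ 1 := by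
      rw [hwdef, eLpNorm_indicator_const hBm hp₂0 hp₂t, hcc, hnorm1]
    have hle := hw w hwm hw0 hws
    have hlow : t ≤ eLpNorm (fun ω => w ω * G ω) p₂ ν := by
      rw [eLpNorm_eq_lintegral_rpow_enorm_toReal hp₂0 hp₂t]
      have hpoint : ∀ ω, B.indicator (fun _ => (cE * t) ^ p₂.toReal) ω
          ≤ (‖w ω * G ω‖₊ : ℝ≥0∞) ^ p₂.toReal := by
        intro ω
        by_cases hωB : ω ∈ B
        · rw [Set.indicator_of_mem hωB]
          apply ENNReal.rpow_le_rpow _ hpt₂.le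
          have hwω : w ω = c := Set.indicator_of_mem hωB _
          rw [nnnorm_mul, ENNReal.coe_mul, hwω, ← enorm_eq_nnnorm, hcc]
          exact mul_le_mul_right (hBA hωB).le cE
        · rw [Set.indicator_of_notMem hωB]; exact zero_le
      have hfin : ((cE * t) ^ p₂.toReal * ν B) ^ (1 / p₂.toReal) = t := by
        rw [ENNReal.mul_rpow_of_nonneg _ _ (by positivity : (0:ℝ) ≤ 1 / p₂.toReal),
          ← ENNReal.rpow_mul, mul_one_div_cancel hpt₂.ne', ENNReal.rpow_one,
          mul_right_comm, hnorm1, one_mul]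
      rw [← hfin]
      apply ENNReal.rpow_le_rpow _ (by positivity : (0:ℝ) ≤ 1 / p₂.toReal)
      rw [← lintegral_indicator_const hBm]
      exact lintegral_mono hpoint
    exact absurd (hlow.trans hle) (not_le.2 hRt)
  · -- p₁ < ∞
    have hp₁0 : p₁ ≠ 0 := (zero_lt_one.trans_le (hp₂.trans hpp.le)).ne'
    have hpt₁ : 0 < p₁.toReal := ENNReal.toReal_pos hp₁0 hp₁
    have hs0 : s ≠ 0 := by
      intro h
      rw [h, ENNReal.inv_zero, top_add] at hs
      exact hp₂0 (ENNReal.inv_eq_top.1 hs)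
    have hst : s ≠ ∞ := by
      intro h
      rw [h] at hs
      simp only [ENNReal.inv_top, zero_add] at hs
      have : p₂ = p₁ := by rw [← inv_inv p₂, hs, inv_inv]
      exact hpp.ne this
    have hst' : 0 < s.toReal := ENNReal.toReal_pos hs0 hst
    have htr : p₂.toReal⁻¹ = s.toReal⁻¹ + p₁.toReal⁻¹ := by
      have h2 := congrArg ENNReal.toReal hs
      rwa [ENNReal.toReal_add (ENNReal.inv_ne_top.2 hs0) (ENNReal.inv_ne_top.2 hp₁0),
        ENNReal.toReal_inv, ENNReal.toReal_inv, ENNReal.toReal_inv] at h2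
    set t₁ := p₁.toReal with ht₁
    set t₂ := p₂.toReal with ht₂
    set ts := s.toReal with hts
    set a : ℝ := t₁ / ts with ha
    have ha0 : 0 < a := div_pos hpt₁ hst'
    rcases eq_or_ne (eLpNorm G p₁ ν) 0 with hN0 | hN0
    · rw [hN0]; exact zero_le
    set N := eLpNorm G p₁ ν with hN
    set I := ∫⁻ ω, ‖G ω‖ₑ ^ t₁ ∂ν with hI
    have hNI : N = I ^ (1 / t₁) := eLpNorm_eq_lintegral_rpow_enorm_toReal hp₁0 hp₁
    have hI0 : I ≠ 0 := by
      intro h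
      rw [h, ENNReal.zero_rpow_of_pos (by positivity)] at hNI
      exact hN0 hNI
    have hIt : I ≠ ∞ := by
      intro h
      rw [h, ENNReal.top_rpow_of_pos (by positivity)] at hNI
      exact hGfin hNI
    have hIN : N ^ t₁ = I := by
      rw [hNI, ← ENNReal.rpow_mul, one_div, inv_mul_cancel₀ hpt₁.ne', ENNReal.rpow_one]
    have hNt : N ≠ ∞ := hGfin
    set D : ℝ≥0∞ := N ^ a with hD
    have hD0 : D ≠ 0 := by simp [hD, ENNReal.rpow_eq_zero_iff, hN0, hNt]
    have hDt : D ≠ ∞ := by simp [hD, ENNReal.rpow_eq_top_iff, hN0, hNt]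
    set d : ℝ := D.toReal with hd
    have hd0 : 0 < d := ENNReal.toReal_pos hD0 hDt
    set w : Ω' → ℝ := fun ω => d⁻¹ * G ω ^ a with hwdef
    have hwm : Measurable w :=
      (((Real.continuous_rpow_const ha0.le).measurable).comp hGm).const_mul _
    have hw0 : ∀ ω, 0 ≤ w ω := fun ω =>
      mul_nonneg (inv_nonneg.2 hd0.le) (Real.rpow_nonneg (hG0 ω) _)
    have hwe : ∀ ω, ‖w ω‖ₑ = D⁻¹ * ‖G ω‖ₑ ^ a := by
      intro ω
      rw [Real.enorm_eq_ofReal (hw0 ω), ENNReal.ofReal_mul (inv_nonneg.2 hd0.le),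
        ENNReal.ofReal_inv_of_pos hd0, ENNReal.ofReal_toReal hDt,
        ← ENNReal.ofReal_rpow_of_nonneg (hG0 ω) ha0.le, ← Real.enorm_eq_ofReal (hG0 ω)]
    have hDts : D ^ ts = I := by
      rw [hD, ← ENNReal.rpow_mul, ha, div_mul_cancel₀ _ hst'.ne', hIN]
    have hinvfin : D⁻¹ ^ ts ≠ ∞ :=
      ENNReal.rpow_ne_top_of_nonneg hst'.le (ENNReal.inv_ne_top.2 hD0)
    have hws : eLpNorm w s ν ≤ 1 := by
      rw [eLpNorm_eq_lintegral_rpow_enorm_toReal hs0 hst, ← hts]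
      have hpt : ∀ ω, ‖w ω‖ₑ ^ ts = D⁻¹ ^ ts * ‖G ω‖ₑ ^ t₁ := by
        intro ω
        rw [hwe ω, ENNReal.mul_rpow_of_nonneg _ _ hst'.le, ← ENNReal.rpow_mul,
          ha, div_mul_cancel₀ _ hst'.ne']
      simp_rw [hpt]
      rw [lintegral_const_mul' _ _ hinvfin, ← hI, ENNReal.inv_rpow, hDts,
        ENNReal.inv_mul_cancel hI0 hIt, ENNReal.one_rpow]
    have hle := hw w hwm hw0 hws
    have hat2 : a * t₂ = t₁ - t₂ := by
      field_simp at htr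
      rw [ha]; field_simp
      nlinarith [htr, hpt₁, hpt₂, hst']
    have hat2' : (a + 1) * t₂ = t₁ := by nlinarith [hat2]
    have hcalc : eLpNorm (fun ω => w ω * G ω) p₂ ν = N := by
      rw [eLpNorm_eq_lintegral_rpow_enorm_toReal hp₂0 hp₂t, ← ht₂]
      have hinvfin2 : D⁻¹ ^ t₂ ≠ ∞ :=
        ENNReal.rpow_ne_top_of_nonneg hpt₂.le (ENNReal.inv_ne_top.2 hD0)
      have hpt : ∀ ω, ‖w ω * G ω‖ₑ ^ t₂ = D⁻¹ ^ t₂ * ‖G ω‖ₑ ^ t₁ := by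
        intro ω
        rw [enorm_mul, hwe ω, mul_assoc]
        nth_rewrite 2 [← ENNReal.rpow_one (‖G ω‖ₑ)]
        rw [← ENNReal.rpow_add_of_nonneg _ _ ha0.le zero_le_one,
          ENNReal.mul_rpow_of_nonneg _ _ hpt₂.le, ← ENNReal.rpow_mul, hat2']
      simp_rw [hpt]
      rw [lintegral_const_mul' _ _ hinvfin2, ← hI, ENNReal.inv_rpow]
      have hDt2 : D ^ t₂ = N ^ (t₁ - t₂) := by
        rw [hD, ← ENNReal.rpow_mul, hat2]
      rw [hDt2, ← hIN]
      have hmul : (N ^ (t₁ - t₂))⁻¹ * N ^ t₁ = N ^ t₂ := by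
        rw [mul_comm, ← div_eq_mul_inv, ← ENNReal.rpow_sub _ _ hN0 hNt]
        congr 1
        ring
      rw [hmul, ← ENNReal.rpow_mul, mul_one_div_cancel hpt₂.ne', ENNReal.rpow_one]
    rw [← hcalc]
    exact hle
end key

/-- Monotonicity in the target exponent: if the `n`-restricted multilinear
Marcinkiewicz–Zygmund inequality with target exponent `p₂` holds with uniform constant `C`,
then it also holds with target exponent `p₁` whenever `1 ≤ p₂ < p₁ ≤ ∞`. -/
theorem statement4 (m : ℕ) (hm : 1 ≤ m) (q : Fin m → ℝ≥0∞) (hq : ∀ i, 1 ≤ q i)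
    (r : ℝ≥0∞) (hr : 1 ≤ r) (n : ℕ) (p₁ p₂ : ℝ≥0∞) (hp₂ : 1 ≤ p₂) (hpp : p₂ < p₁)
    (C : ℝ) (hC : 0 ≤ C) (h : MZpropN m q p₂ r C n) :
    MZpropN m q p₁ r C n := by
  intro Ω _ μ _ Ω' _ ν _ T M hM hT f hf
  unfold MZineq
  have hp₁ : 1 ≤ p₁ := hp₂.trans hpp.le
  have hTk : ∀ k : ∀ i, Fin n, MemLp (T fun i => f i (k i)) p₁ ν :=
    fun k => hT.memℒp _ (fun j => hf j (k j))
  set g : (∀ i : Fin m, Fin n) → Ω' → ℝ := fun k => ((hTk k).1.mk _) with hg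
  have hgm : ∀ k, Measurable (g k) := fun k =>
    ((hTk k).1.stronglyMeasurable_mk).measurable
  have hgae : ∀ k, (T fun i => f i (k i)) =ᵐ[ν] g k := fun k => (hTk k).1.ae_eq_mk
  have hGG' : (fun ω => lrNorm r fun k : ∀ i : Fin m, Fin n => T (fun i => f i (k i)) ω)
      =ᵐ[ν] (fun ω => lrNorm r fun k => g k ω) := by
    filter_upwards [ae_all_iff.2 hgae] with ω hω
    congr 1
    exact funext fun k => hω k
  rw [eLpNorm_congr_ae hGG']
  set s : ℝ≥0∞ := (p₂⁻¹ - p₁⁻¹)⁻¹ with hsdef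
  have hs : 1 / p₂ = 1 / s + 1 / p₁ := by
    simp only [one_div, hsdef, inv_inv]
    exact (tsub_add_cancel_of_le (ENNReal.inv_le_inv.2 hpp.le)).symm
  set R : ℝ≥0∞ := ENNReal.ofReal (C * M) *
    ∏ i, eLpNorm (fun x => lrNorm r fun kᵢ : Fin n => f i kᵢ x) (q i) (μ i) with hRdef
  have hRfin : R ≠ ∞ := by
    apply ENNReal.mul_ne_top ENNReal.ofReal_ne_top
    refine (ENNReal.prod_lt_top fun i _ => ?_).ne
    refine lt_of_le_of_lt
      (eLpNorm_lrNorm_le (μ i) hr (hq i) _ (fun k => (hf i k).1)) ?_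
    exact ENNReal.sum_lt_top.2 fun k _ => (hf i k).2
  refine key_lemma ν hp₂ hpp hs (lrNorm_measurable r g hgm)
    (fun ω => lrNorm_nonneg _ _) ?_ hRfin ?_
  · -- finiteness of eLpNorm G' p₁
    refine (lt_of_le_of_lt
      (eLpNorm_lrNorm_le ν hr hp₁ g (fun k => (hgm k).aestronglyMeasurable)) ?_).ne
    exact ENNReal.sum_lt_top.2 fun k _ => ((hTk k).ae_eq (hgae k)).2
  · -- the weighted bound
    intro w hwm hw0 hws
    have e1 : eLpNorm (fun ω => w ω * lrNorm r fun k => g k ω) p₂ ν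
        = eLpNorm (fun ω => w ω *
            lrNorm r fun k : ∀ i : Fin m, Fin n => T (fun i => f i (k i)) ω) p₂ ν := by
      apply eLpNorm_congr_ae
      filter_upwards [hGG'] with ω hω
      rw [← hω]
    rw [e1]
    set T' : (∀ i, Ω i → ℝ) → Ω' → ℝ := fun h ω => w ω * T h ω with hT'def
    have hwmem : MemLp w s ν := ⟨hwm.aestronglyMeasurable, lt_of_le_of_lt hws one_lt_top⟩
    have hsmul : ∀ f₀ : ∀ i, Ω i → ℝ, (w • T f₀) = T' f₀ := by
      intro f₀
      funext ω
      simp [hT'def, Pi.smul_apply', smul_eq_mul]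
    have hT'b : IsBddMultilinear μ ν q p₂ T' M := by
      constructor
      · intro f₀ g₀ hf₀ hg₀ hfg
        filter_upwards [hT.congr f₀ g₀ hf₀ hg₀ hfg] with ω hω
        simp only [hT'def, hω]
      · intro f₀ hf₀ i c g₀ h₀ hg₀ hh₀
        filter_upwards [hT.multilinear f₀ hf₀ i c g₀ h₀ hg₀ hh₀] with ω hω
        simp only [hT'def, hω]
        ring
      · intro f₀ hf₀
        have := (hT.memℒp f₀ hf₀).smul hwmem (r := p₂) (hpqr := ⟨by simpa only [one_div] using hs.symm⟩)
        rwa [hsmul f₀] at this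
      · intro f₀ hf₀
        calc eLpNorm (T' f₀) p₂ ν ≤ eLpNorm w s ν * eLpNorm (T f₀) p₁ ν := by
              have := eLpNorm_smul_le_mul_eLpNorm (hT.memℒp f₀ hf₀).1
                hwm.aestronglyMeasurable (r := p₂) (hpqr := ⟨by simpa only [one_div] using hs.symm⟩)
              rwa [hsmul f₀] at this
          _ ≤ 1 * (ENNReal.ofReal M * ∏ i, eLpNorm (f₀ i) (q i) (μ i)) :=
              mul_le_mul' hws (hT.bound f₀ hf₀)
          _ = ENNReal.ofReal M * ∏ i, eLpNorm (f₀ i) (q i) (μ i) := one_mul _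
    have hMZ := h Ω μ Ω' ν T' M hM hT'b f hf
    unfold MZineq at hMZ
    have e2 : (fun ω => lrNorm r fun k : ∀ i : Fin m, Fin n => T' (fun i => f i (k i)) ω)
        = fun ω => w ω *
            lrNorm r fun k : ∀ i : Fin m, Fin n => T (fun i => f i (k i)) ω := by
      funext ω
      exact lrNorm_const_mul hr (w ω) (hw0 ω) _
    rw [e2] at hMZ
    exact hMZ
end

section
/- Let m ≥ 1 and let 1 ≤ q₁, …, q_m ≤ r ≤ p ≤ ∞ (that is, qᵢ ≤ r for every i and r ≤ p). Then for all σ-finite measure spaces, every m-linear operator T : L^{q₁}(μ₁) × ⋯ × L^{q_m}(μ_m) → L^p(ν) bounded with norm at most M, and all finite families {f^i_{kᵢ}}_{kᵢ=1}^{nᵢ} ⊂ L^{qᵢ}(μᵢ), the Marcinkiewicz–Zygmund inequality at exponent r holds with constant M (i.e., with C = 1). -/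
open MeasureTheory ENNReal Function

noncomputable def elr {ι : Type} [Fintype ι] (r : ℝ≥0∞) (a : ι → ℝ≥0∞) : ℝ≥0∞ :=
  if r = ∞ then ⨆ k, a k else (∑ k, a k ^ r.toReal) ^ (1 / r.toReal)

lemma elr_mono {ι : Type} [Fintype ι] {r : ℝ≥0∞} {a b : ι → ℝ≥0∞} (h : ∀ k, a k ≤ b k) :
    elr r a ≤ elr r b := by
  unfold elr; split
  · exact iSup_mono h
  · exact ENNReal.rpow_le_rpow
      (Finset.sum_le_sum fun k _ => ENNReal.rpow_le_rpow (h k) ENNReal.toReal_nonneg)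
      (by positivity)

lemma coe_nnnorm_lrNorm {ι : Type} [Fintype ι] {r : ℝ≥0∞} (hr : r ≠ 0) (a : ι → ℝ) :
    (‖lrNorm r a‖₊ : ℝ≥0∞) = elr r fun k => (‖a k‖₊ : ℝ≥0∞) := by
  by_cases htop : r = ∞
  · subst htop
    rw [lrNorm, elr, if_pos rfl, if_pos rfl]
    cases isEmpty_or_nonempty ι with
    | inl h => simp [iSup_of_empty', Real.sSup_empty]
    | inr h =>
      obtain ⟨k₀, hk₀⟩ := Finite.exists_max fun k => |a k|
      have h1 : (⨆ k, |a k|) = |a k₀| :=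
        le_antisymm (ciSup_le hk₀) (le_ciSup (f := fun k => |a k|) (Finite.bddAbove_range _) k₀)
      have h2 : (⨆ k, ((‖a k‖₊ : ℝ≥0∞))) = (‖a k₀‖₊ : ℝ≥0∞) := by
        refine le_antisymm (iSup_le fun k => ?_) (le_iSup (f := fun k => ((‖a k‖₊ : ℝ≥0∞))) k₀)
        rw [← enorm_eq_nnnorm, ← enorm_eq_nnnorm, Real.enorm_eq_ofReal_abs, Real.enorm_eq_ofReal_abs]
        exact ENNReal.ofReal_le_ofReal (hk₀ k)
      rw [h1, h2, Real.nnnorm_abs]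
  · have ht : 0 < r.toReal := ENNReal.toReal_pos hr htop
    rw [lrNorm, elr, if_neg htop, if_neg htop]
    have h0 : (0:ℝ) ≤ ∑ k, |a k| ^ r.toReal :=
      Finset.sum_nonneg fun k _ => Real.rpow_nonneg (abs_nonneg _) _
    rw [← enorm_eq_nnnorm, Real.enorm_eq_ofReal (Real.rpow_nonneg h0 _),
      ← ENNReal.ofReal_rpow_of_nonneg h0 (by positivity),
      ENNReal.ofReal_sum_of_nonneg (fun k _ => Real.rpow_nonneg (abs_nonneg _) _)]
    congr 1
    refine Finset.sum_congr rfl fun k _ => ?_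
    rw [← ENNReal.ofReal_rpow_of_nonneg (abs_nonneg _) ht.le, ← enorm_eq_nnnorm, Real.enorm_eq_ofReal_abs]

lemma elr_const_mul {ι : Type} [Fintype ι] {r : ℝ≥0∞} (hr : r ≠ 0) (c : ℝ≥0∞) (a : ι → ℝ≥0∞) :
    elr r (fun k => c * a k) = c * elr r a := by
  unfold elr; split
  case isTrue h => exact (ENNReal.mul_iSup c fun k => a k).symm
  case isFalse h =>
    have ht : 0 < r.toReal := ENNReal.toReal_pos hr h
    simp_rw [ENNReal.mul_rpow_of_nonneg _ _ ht.le]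
    rw [← Finset.mul_sum, ENNReal.mul_rpow_of_nonneg _ _ (by positivity),
      ← ENNReal.rpow_mul, mul_one_div, div_self ht.ne', ENNReal.rpow_one]

lemma elr_prod {m : ℕ} {n : Fin m → ℕ} {r : ℝ≥0∞}
    (a : ∀ i, Fin (n i) → ℝ≥0∞) :
    elr r (fun k : ∀ i, Fin (n i) => ∏ i, a i (k i)) = ∏ i, elr r (a i) := by
  unfold elr; split
  case isTrue h =>
    by_cases hne : Nonempty (∀ i, Fin (n i))
    · have hne' : ∀ i, Nonempty (Fin (n i)) := fun i => hne.elim fun k => ⟨k i⟩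
      apply le_antisymm
      · exact iSup_le fun k => Finset.prod_le_prod' fun i _ => le_iSup (a i) (k i)
      · have hmax : ∀ i, ∃ j, ∀ j', a i j' ≤ a i j := fun i => Finite.exists_max (a i)
        choose ks hks using hmax
        calc ∏ i, ⨆ j, a i j ≤ ∏ i, a i (ks i) :=
              Finset.prod_le_prod' fun i _ => iSup_le (hks i)
          _ ≤ ⨆ k : ∀ i, Fin (n i), ∏ i, a i (k i) :=
              le_iSup (fun k : ∀ i, Fin (n i) => ∏ i, a i (k i)) ks
    · have h0 : ∃ i, n i = 0 := by
        by_contra hc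
        push_neg at hc
        exact hne ⟨fun i => ⟨0, Nat.pos_of_ne_zero (hc i)⟩⟩
      obtain ⟨i0, hi0⟩ := h0
      rw [not_nonempty_iff] at hne
      rw [iSup_of_empty]
      refine (Finset.prod_eq_zero (Finset.mem_univ i0) ?_).symm
      have : IsEmpty (Fin (n i0)) := by rw [hi0]; exact Fin.isEmpty'
      exact iSup_of_empty _
  case isFalse h =>
    simp only
    rw [ENNReal.prod_rpow_of_nonneg (by positivity : (0:ℝ) ≤ 1 / r.toReal),
      Finset.prod_univ_sum, Fintype.piFinset_univ]
    congr 1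
    exact Finset.sum_congr rfl fun k _ =>
      (ENNReal.prod_rpow_of_nonneg ENNReal.toReal_nonneg).symm

lemma lintegral_Lp_sum_le {Ω : Type} [MeasurableSpace Ω] {μ : Measure Ω} {s : ℝ} (hs : 1 ≤ s)
    {ι : Type} (t : Finset ι) (h : ι → Ω → ℝ≥0∞) (hh : ∀ k, AEMeasurable (h k) μ) :
    (∫⁻ x, (∑ k ∈ t, h k x) ^ s ∂μ) ^ (1/s) ≤ ∑ k ∈ t, (∫⁻ x, h k x ^ s ∂μ) ^ (1/s) := by
  have hs0 : 0 < s := zero_lt_one.trans_le hs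
  classical
  induction t using Finset.induction with
  | empty =>
    simp [ENNReal.zero_rpow_of_pos hs0, ENNReal.zero_rpow_of_pos (one_div_pos.mpr hs0), hs0]
  | @insert k t hk ih =>
    simp_rw [Finset.sum_insert hk]
    calc (∫⁻ x, (h k x + ∑ j ∈ t, h j x) ^ s ∂μ) ^ (1/s)
        ≤ (∫⁻ x, h k x ^ s ∂μ) ^ (1/s) + (∫⁻ x, (∑ j ∈ t, h j x) ^ s ∂μ) ^ (1/s) :=
          ENNReal.lintegral_Lp_add_le (hh k) (Finset.aemeasurable_fun_sum t fun j _ => hh j) hs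
      _ ≤ _ := add_le_add le_rfl ih

lemma minkowski_fin {ι : Type} [Fintype ι] {Ω : Type} [MeasurableSpace Ω] (μ : Measure Ω)
    {s : ℝ} (hs : 1 ≤ s) (h : ι → Ω → ℝ≥0∞) (hh : ∀ k, AEMeasurable (h k) μ) :
    (∑ k, (∫⁻ x, h k x ∂μ) ^ s) ^ (1/s) ≤ ∫⁻ x, (∑ k, h k x ^ s) ^ (1/s) ∂μ := by
  rcases eq_or_lt_of_le hs with rfl | h1
  · simp only [ENNReal.rpow_one, div_one, one_div_one]
    rw [lintegral_finset_sum' _ (fun k _ => hh k)]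
  · have hs0 : 0 < s := zero_lt_one.trans h1
    set s' := s / (s - 1) with hs'
    have hpq : s'.HolderConjugate s := (Real.HolderConjugate.conjExponent h1).symm
    set A : ι → ℝ≥0∞ := fun k => ∫⁻ x, h k x ∂μ with hA
    set S : ℝ≥0∞ := ∑ k, A k ^ s with hSdef
    show S ^ (1/s) ≤ _
    by_cases hS0 : S = 0
    · rw [hS0, ENNReal.zero_rpow_of_pos (one_div_pos.mpr hs0)]; exact zero_le
    by_cases hStop : S = ∞
    · have hex : ∃ k, A k ^ s = ∞ := by
        by_contra hc; push_neg at hc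
        exact (ENNReal.sum_ne_top.mpr fun k _ => hc k) hStop
      obtain ⟨k, hk⟩ := hex
      have hAk : A k = ∞ := by
        rw [ENNReal.rpow_eq_top_iff] at hk
        rcases hk with ⟨_, hneg⟩ | ⟨h2, _⟩
        · exact absurd hneg (not_lt.mpr hs0.le)
        · exact h2
      have htop : ∫⁻ x, (∑ j, h j x ^ s) ^ (1/s) ∂μ = ∞ := by
        refine eq_top_iff.mpr ?_
        calc (⊤:ℝ≥0∞) = A k := hAk.symm
          _ = ∫⁻ x, h k x ∂μ := rfl
          _ ≤ ∫⁻ x, (∑ j, h j x ^ s) ^ (1/s) ∂μ := by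
              refine lintegral_mono fun x => ?_
              calc h k x = (h k x ^ s) ^ (1/s) := by
                    rw [← ENNReal.rpow_mul, mul_one_div, div_self hs0.ne', ENNReal.rpow_one]
                _ ≤ _ := ENNReal.rpow_le_rpow
                    (Finset.single_le_sum (f := fun j => h j x ^ s)
                      (fun j _ => zero_le) (Finset.mem_univ k))
                    (one_div_pos.mpr hs0).le
      rw [htop]; exact le_top
    · -- main case : 0 < S < ∞
      have hAlt : ∀ k, A k ≠ ∞ := by
        intro k hk
        refine hStop (eq_top_iff.mpr ?_)
        calc (⊤:ℝ≥0∞) = A k ^ s := by rw [hk, ENNReal.top_rpow_of_pos hs0]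
          _ ≤ S := Finset.single_le_sum (f := fun j => A j ^ s)
              (fun j _ => zero_le) (Finset.mem_univ k)
      have hs1ne : s - 1 ≠ 0 := sub_ne_zero.mpr h1.ne'
      have hconj : ∀ k, (A k ^ (s-1)) ^ s' = A k ^ s := by
        intro k
        rw [← ENNReal.rpow_mul]
        congr 1
        rw [hs']; field_simp
      have step1 : S = ∫⁻ x, ∑ k, A k ^ (s-1) * h k x ∂μ := by
        rw [lintegral_finset_sum' _ (fun k _ => (hh k).const_mul _)]
        refine Finset.sum_congr rfl fun k _ => ?_
        rw [lintegral_const_mul' _ _ (ENNReal.rpow_ne_top_of_nonneg (sub_pos.mpr h1).le (hAlt k))]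
        by_cases hA0 : A k = 0
        · rw [hA0, ENNReal.zero_rpow_of_pos hs0, ENNReal.zero_rpow_of_pos (sub_pos.mpr h1),
            zero_mul]
        · conv_lhs => rw [show s = (s-1) + 1 by ring]
          rw [ENNReal.rpow_add _ _ hA0 (hAlt k), ENNReal.rpow_one]
      set I := ∫⁻ x, (∑ j, h j x ^ s) ^ (1/s) ∂μ with hI
      have step2 : S ≤ S ^ (1/s') * I := by
        refine step1.trans_le ?_
        rw [hI, ← lintegral_const_mul' _ _
          (ENNReal.rpow_ne_top_of_nonneg hpq.one_div_nonneg hStop)]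
        refine lintegral_mono fun x => ?_
        calc ∑ k, A k ^ (s-1) * h k x
            ≤ (∑ k, (A k ^ (s-1)) ^ s') ^ (1/s') * (∑ k, h k x ^ s) ^ (1/s) :=
              ENNReal.inner_le_Lp_mul_Lq Finset.univ (fun k => A k ^ (s-1)) (fun k => h k x) hpq
          _ = S ^ (1/s') * (∑ k, h k x ^ s) ^ (1/s) := by
              congr 2
              exact Finset.sum_congr rfl fun k _ => hconj k
      have hfac : S = S ^ (1/s') * S ^ (1/s) := by
        rw [← ENNReal.rpow_add _ _ hS0 hStop]
        rw [show 1/s' + 1/s = 1 by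
          rw [one_div, one_div]; exact hpq.inv_add_inv_eq_inv.trans inv_one]
        rw [ENNReal.rpow_one]
      have step3 : S ^ (1/s') * S ^ (1/s) ≤ S ^ (1/s') * I :=
        le_of_le_of_eq (le_of_eq hfac.symm) rfl |>.trans step2
      exact (ENNReal.mul_le_mul_iff_right
        (by simp [ENNReal.rpow_eq_zero_iff, hS0, hStop, hpq.symm.pos, one_div_pos.mpr hpq.symm.pos])
        (ENNReal.rpow_ne_top_of_nonneg hpq.one_div_nonneg hStop)).mp step3

lemma lemma1 {ι : Type} [Fintype ι] {Ω' : Type} [MeasurableSpace Ω'] (ν : Measure Ω')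
    {r p : ℝ≥0∞} (hr : 1 ≤ r) (hrp : r ≤ p) (F : ι → Ω' → ℝ)
    (hF : ∀ k, AEStronglyMeasurable (F k) ν) :
    eLpNorm (fun ω => lrNorm r fun k => F k ω) p ν ≤ elr r fun k => eLpNorm (F k) p ν := by
  have hr0 : r ≠ 0 := by rintro rfl; exact absurd hr (by simp)
  by_cases hp : p = ∞
  · subst hp
    rw [eLpNorm_exponent_top, eLpNormEssSup]
    have hae : ∀ᵐ ω ∂ν, ∀ k, (‖F k ω‖₊ : ℝ≥0∞) ≤ eLpNorm (F k) ∞ ν := by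
      rw [MeasureTheory.ae_all_iff]
      intro k
      rw [eLpNorm_exponent_top]
      exact enorm_ae_le_eLpNormEssSup (F k) ν
    refine essSup_le_of_ae_le _ (hae.mono fun ω hω => ?_)
    show (‖lrNorm r fun k => F k ω‖₊ : ℝ≥0∞) ≤ elr r fun k => eLpNorm (F k) ⊤ ν
    rw [coe_nnnorm_lrNorm hr0]
    exact elr_mono hω
  · have hrtop : r ≠ ∞ := fun h => hp (top_le_iff.mp (h ▸ hrp))
    have hp0 : p ≠ 0 := fun h => hr0 (le_antisymm (h ▸ hrp) (zero_le : (0:ℝ≥0∞) ≤ r))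
    set t := r.toReal with htdef
    set pt := p.toReal with hptdef
    have ht1 : 1 ≤ t := by
      simpa using ENNReal.toReal_mono hrtop hr
    have ht0 : 0 < t := zero_lt_one.trans_le ht1
    have htpt : t ≤ pt := ENNReal.toReal_mono hp hrp
    have hpt0 : 0 < pt := ht0.trans_le htpt
    set s := pt / t with hsdef
    have hs1 : 1 ≤ s := (one_le_div ht0).mpr htpt
    have hs0 : 0 < s := zero_lt_one.trans_le hs1
    rw [eLpNorm_eq_lintegral_rpow_enorm_toReal hp0 hp]
    simp only [enorm_eq_nnnorm, ← hptdef]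
    have key : ∀ ω, ((‖lrNorm r fun k => F k ω‖₊ : ℝ≥0∞)) ^ pt
        = (∑ k, (‖F k ω‖₊ : ℝ≥0∞) ^ t) ^ s := by
      intro ω
      rw [coe_nnnorm_lrNorm hr0, elr, if_neg hrtop, ← ENNReal.rpow_mul]
      congr 1
      rw [one_div_mul_eq_div]
    simp_rw [key]
    rw [elr, if_neg hrtop]
    have hsplit : (1:ℝ)/pt = (1/s) * (1/t) := by
      rw [hsdef]; field_simp
    rw [hsplit, ENNReal.rpow_mul]
    refine ENNReal.rpow_le_rpow ?_ (by positivity)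
    calc (∫⁻ ω, (∑ k, ((‖F k ω‖₊ : ℝ≥0∞)) ^ t) ^ s ∂ν) ^ (1/s)
        ≤ ∑ k, (∫⁻ ω, (((‖F k ω‖₊ : ℝ≥0∞)) ^ t) ^ s ∂ν) ^ (1/s) :=
          lintegral_Lp_sum_le hs1 Finset.univ _ (fun k => (hF k).enorm.pow_const t)
      _ = ∑ k, (eLpNorm (F k) p ν) ^ t := by
          refine Finset.sum_congr rfl fun k _ => ?_
          rw [eLpNorm_eq_lintegral_rpow_enorm_toReal hp0 hp, ← ENNReal.rpow_mul]
          simp only [enorm_eq_nnnorm, ← hptdef]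
          simp_rw [← ENNReal.rpow_mul]
          congr 1
          · congr 1; ext ω; congr 1; rw [hsdef]; field_simp
          · rw [hsdef]; field_simp

lemma lemma2 {ι : Type} [Fintype ι] {Ω : Type} [MeasurableSpace Ω] (μ : Measure Ω)
    {q r : ℝ≥0∞} (hq : 1 ≤ q) (hqr : q ≤ r) (f : ι → Ω → ℝ)
    (hf : ∀ k, AEStronglyMeasurable (f k) μ) :
    elr r (fun k => eLpNorm (f k) q μ) ≤ eLpNorm (fun x => lrNorm r fun k => f k x) q μ := by
  have hq0 : q ≠ 0 := by rintro rfl; exact absurd hq (by simp)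
  by_cases hrtop : r = ∞
  · subst hrtop
    rw [elr, if_pos rfl]
    refine iSup_le fun k => eLpNorm_mono fun x => ?_
    rw [lrNorm, if_pos rfl]
    have h1 : |f k x| ≤ ⨆ k', |f k' x| :=
      le_ciSup (f := fun k' => |f k' x|) (Finite.bddAbove_range _) k
    rw [Real.norm_eq_abs, Real.norm_eq_abs]
    exact h1.trans (le_abs_self _)
  · have hr0 : r ≠ 0 := fun h => hq0 (le_antisymm (h ▸ hqr) (zero_le : (0:ℝ≥0∞) ≤ q))
    have hqtop : q ≠ ∞ := fun h => hrtop (top_le_iff.mp (h ▸ hqr))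
    set u := q.toReal with hudef
    set t := r.toReal with htdef
    have hu1 : 1 ≤ u := by simpa using ENNReal.toReal_mono hqtop hq
    have hu0 : 0 < u := zero_lt_one.trans_le hu1
    have htu : u ≤ t := ENNReal.toReal_mono hrtop hqr
    have ht0 : 0 < t := hu0.trans_le htu
    set s := t / u with hsdef
    have hs1 : 1 ≤ s := (one_le_div hu0).mpr htu
    have hus : u * s = t := by rw [hsdef, mul_comm, div_mul_cancel₀ _ hu0.ne']
    have h1s : (1:ℝ)/t * u = 1/s := by rw [hsdef, one_div_div, one_div_mul_eq_div]
    have mink := minkowski_fin μ hs1 (fun k x => ((‖f k x‖₊ : ℝ≥0∞)) ^ u)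
        (fun k => (hf k).enorm.pow_const u)
    rw [elr, if_neg hrtop, eLpNorm_eq_lintegral_rpow_enorm_toReal hq0 hqtop]
    simp only [enorm_eq_nnnorm]
    have hRHS : ∀ x, ((‖lrNorm r fun k => f k x‖₊ : ℝ≥0∞)) ^ u
        = (∑ k, (((‖f k x‖₊ : ℝ≥0∞)) ^ u) ^ s) ^ (1/s) := by
      intro x
      rw [coe_nnnorm_lrNorm hr0, elr, if_neg hrtop, ← ENNReal.rpow_mul, h1s]
      congr 1
      refine Finset.sum_congr rfl fun k _ => ?_
      rw [← ENNReal.rpow_mul, hus]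
    have hLHS : (∑ k, eLpNorm (f k) q μ ^ t) ^ ((1:ℝ)/t)
        = ((∑ k, (∫⁻ x, ((‖f k x‖₊ : ℝ≥0∞)) ^ u ∂μ) ^ s) ^ ((1:ℝ)/s)) ^ ((1:ℝ)/u) := by
      rw [← ENNReal.rpow_mul]
      have hq1 : (1:ℝ)/s * (1/u) = 1/t := by
        have h1 := hu0.ne'
        have h2 := ht0.ne'
        rw [hsdef]
        field_simp
      rw [hq1]
      congr 1
      refine Finset.sum_congr rfl fun k _ => ?_
      rw [eLpNorm_eq_lintegral_rpow_enorm_toReal hq0 hqtop, ← ENNReal.rpow_mul,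
        one_div_mul_eq_div, ← hsdef]
      rfl
    calc (∑ k, eLpNorm (f k) q μ ^ t) ^ ((1:ℝ)/t)
        = ((∑ k, (∫⁻ x, ((‖f k x‖₊ : ℝ≥0∞)) ^ u ∂μ) ^ s) ^ ((1:ℝ)/s)) ^ ((1:ℝ)/u) := hLHS
      _ ≤ (∫⁻ x, (∑ k, (((‖f k x‖₊ : ℝ≥0∞)) ^ u) ^ s) ^ ((1:ℝ)/s) ∂μ) ^ ((1:ℝ)/u) :=
          ENNReal.rpow_le_rpow mink (by positivity)
      _ = (∫⁻ x, ((‖lrNorm r fun k => f k x‖₊ : ℝ≥0∞)) ^ u ∂μ) ^ ((1:ℝ)/u) := by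
          congr 1
          exact lintegral_congr fun x => (hRHS x).symm

/-- If `qᵢ ≤ r` for every `i` and `r ≤ p`, then the multilinear
Marcinkiewicz–Zygmund inequality at exponent `r` holds with constant `1`. -/
theorem statement7 (m : ℕ) (hm : 1 ≤ m) (q : Fin m → ℝ≥0∞) (hq : ∀ i, 1 ≤ q i)
    (p r : ℝ≥0∞) (hqr : ∀ i, q i ≤ r) (hrp : r ≤ p) :
    MZprop m q p r 1 := by
  intro Ω _ μ _ Ω' _ ν _ T M hM hT n f hf
  have i0 : Fin m := ⟨0, hm⟩
  have hr1 : 1 ≤ r := le_trans (hq i0) (hqr i0)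
  have hr0 : r ≠ 0 := by rintro rfl; exact absurd hr1 (by simp)
  unfold MZineq
  rw [one_mul]
  calc eLpNorm (fun ω => lrNorm r fun k : ∀ i, Fin (n i) => T (fun i => f i (k i)) ω) p ν
      ≤ elr r (fun k : ∀ i, Fin (n i) => eLpNorm (T (fun i => f i (k i))) p ν) :=
        lemma1 ν hr1 hrp _ (fun k => (hT.memℒp _ (fun j => hf j (k j))).1)
    _ ≤ elr r (fun k : ∀ i, Fin (n i) =>
          ENNReal.ofReal M * ∏ i, eLpNorm (f i (k i)) (q i) (μ i)) :=
        elr_mono fun k => hT.bound _ (fun j => hf j (k j))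
    _ = ENNReal.ofReal M * elr r (fun k : ∀ i, Fin (n i) =>
          ∏ i, eLpNorm (f i (k i)) (q i) (μ i)) := elr_const_mul hr0 _ _
    _ = ENNReal.ofReal M * ∏ i, elr r (fun kᵢ => eLpNorm (f i kᵢ) (q i) (μ i)) := by
        rw [elr_prod (fun i kᵢ => eLpNorm (f i kᵢ) (q i) (μ i))]
    _ ≤ ENNReal.ofReal M *
        ∏ i, eLpNorm (fun x => lrNorm r fun kᵢ : Fin (n i) => f i kᵢ x) (q i) (μ i) := by
        refine mul_le_mul_right (Finset.prod_le_prod' fun i _ => ?_) _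
        exact lemma2 (μ i) (hq i) (hqr i) _ (fun kᵢ => (hf i kᵢ).1)
end

section
/- Let 1 ≤ r < 4/3. Then for every constant C ≥ 0 there exist n ∈ ℕ and a bilinear form T : ℝⁿ × ℝⁿ → ℝ such that (∑_{i,j=1}^n |T(e_i, e_j)|^r)^{1/r} > C · sup{ |T(x,y)| : ‖x‖_{ℓ^∞} ≤ 1, ‖y‖_{ℓ^∞} ≤ 1 }, where e₁, …, e_n are the standard basis vectors of ℝⁿ and ‖·‖_{ℓ^∞} is the maximum norm on ℝⁿ. -/
open Finset

namespace Stmt11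

noncomputable def ee : Bool → Bool → ℝ := fun x y => if x && y then -1 else 1

lemma abs_ee (x y : Bool) : |ee x y| = 1 := by cases x <;> cases y <;> simp [ee]

lemma sum_ee (u v : Bool) : (∑ x : Bool, ee x u * ee x v) = if u = v then 2 else 0 := by
  cases u <;> cases v <;> simp [ee] <;> norm_num

noncomputable def Hh {k : ℕ} (a b : Fin k → Bool) : ℝ := ∏ i, ee (a i) (b i)

lemma abs_Hh {k : ℕ} (a b : Fin k → Bool) : |Hh a b| = 1 := by
  rw [Hh, Finset.abs_prod]
  simp [abs_ee]

lemma sum_Hh {k : ℕ} (b b' : Fin k → Bool) :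
    (∑ a : Fin k → Bool, Hh a b * Hh a b') = if b = b' then ((2 : ℝ) ^ k) else 0 := by
  have h1 : ∀ a : Fin k → Bool, Hh a b * Hh a b'
      = ∏ i, (ee (a i) (b i) * ee (a i) (b' i)) := by
    intro a; rw [Hh, Hh, ← Finset.prod_mul_distrib]
  simp_rw [h1]
  rw [show (∑ a : Fin k → Bool, ∏ i, (ee (a i) (b i) * ee (a i) (b' i)))
      = ∏ i, ∑ x : Bool, (ee x (b i) * ee x (b' i)) by
    rw [Finset.prod_univ_sum]
    refine Finset.sum_congr ?_ fun _ _ => rfl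
    ext f; simp]
  simp_rw [sum_ee]
  by_cases hbb : b = b'
  · simp [hbb]
  · rw [if_neg hbb]
    obtain ⟨i, hi⟩ : ∃ i, b i ≠ b' i := by
      by_contra h; push_neg at h; exact hbb (funext h)
    exact Finset.prod_eq_zero (Finset.mem_univ i) (by simp [hi])


variable {n : ℕ}

noncomputable def Tk (M : Fin n → Fin n → ℝ) :
    (Fin n → ℝ) →ₗ[ℝ] (Fin n → ℝ) →ₗ[ℝ] ℝ :=
  LinearMap.mk₂ ℝ (fun x y => ∑ i, ∑ j, M i j * (x i * y j))
    (fun x x' y => by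
      simp only [Pi.add_apply, mul_add, add_mul, Finset.sum_add_distrib])
    (fun c x y => by
      simp only [Pi.smul_apply, smul_eq_mul, Finset.mul_sum]
      exact Finset.sum_congr rfl fun i _ => Finset.sum_congr rfl fun j _ => by ring)
    (fun x y y' => by
      simp only [Pi.add_apply, mul_add, add_mul, Finset.sum_add_distrib])
    (fun c x y => by
      simp only [Pi.smul_apply, smul_eq_mul, Finset.mul_sum]
      exact Finset.sum_congr rfl fun i _ => Finset.sum_congr rfl fun j _ => by ring)

lemma Tk_apply (M : Fin n → Fin n → ℝ) (x y : Fin n → ℝ) :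
    Tk M x y = ∑ i, ∑ j, M i j * (x i * y j) := rfl

lemma Tk_single (M : Fin n → Fin n → ℝ) (i j : Fin n) :
    Tk M (Pi.single i 1) (Pi.single j 1) = M i j := by
  rw [Tk_apply]
  rw [Finset.sum_eq_single i]
  · rw [Finset.sum_eq_single j]
    · simp
    · intro j' _ hj'; simp [Pi.single_apply, hj']
    · simp
  · intro i' _ hi'
    apply Finset.sum_eq_zero
    intro j' _; simp [Pi.single_apply, hi']
  · simp

end Stmt11

/-- For `1 ≤ r < 4/3` and every `C ≥ 0` there are `n ∈ ℕ` and a bilinear form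
`T : ℝⁿ × ℝⁿ → ℝ` with `(∑_{i,j} |T(eᵢ,eⱼ)|^r)^{1/r} > C · sup{|T(x,y)| : ‖x‖_∞,‖y‖_∞ ≤ 1}`. -/
theorem statement11 (r : ℝ) (hr1 : 1 ≤ r) (hr : r < 4 / 3) :
    ∀ C : ℝ, 0 ≤ C →
      ∃ (n : ℕ) (T : (Fin n → ℝ) →ₗ[ℝ] (Fin n → ℝ) →ₗ[ℝ] ℝ),
        (∑ i : Fin n, ∑ j : Fin n, |T (Pi.single i 1) (Pi.single j 1)| ^ r) ^ (1 / r)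
          > C * ⨆ z : {z : (Fin n → ℝ) × (Fin n → ℝ) //
                  (∀ j, |z.1 j| ≤ 1) ∧ (∀ j, |z.2 j| ≤ 1)},
                |T z.1.1 z.1.2| := by
  intro C hC
  have hr0 : (0 : ℝ) < r := lt_of_lt_of_le one_pos hr1
  set ε : ℝ := 2 / r - 3 / 2 with hεdef
  have hεpos : 0 < ε := by
    have h32 : (3 : ℝ) / 2 < 2 / r := by
      rw [div_lt_div_iff₀ (by norm_num) hr0]; linarith
    simp only [hεdef]; linarith
  obtain ⟨m, hm⟩ := exists_nat_gt C
  obtain ⟨k, hk⟩ := exists_nat_ge ((m : ℝ) / ε)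
  set n : ℕ := 2 ^ k with hn
  have hcard : Fintype.card (Fin k → Bool) = n := by
    simp [hn, Fintype.card_fun]
  let ι : Fin n ≃ (Fin k → Bool) := (Fintype.equivFinOfCardEq hcard).symm
  let M : Fin n → Fin n → ℝ := fun i j => Stmt11.Hh (ι i) (ι j)
  have npos : (0 : ℝ) < (n : ℝ) := by positivity
  have hncast : ((n : ℕ) : ℝ) = (2 : ℝ) ^ k := by push_cast [hn]; ring
  have habsM : ∀ i j : Fin n, |M i j| = 1 := fun i j => Stmt11.abs_Hh _ _
  have horth : ∀ j j' : Fin n,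
      (∑ i : Fin n, M i j * M i j') = if j = j' then (n : ℝ) else 0 := by
    intro j j'
    have := Equiv.sum_comp ι (fun a => Stmt11.Hh a (ι j) * Stmt11.Hh a (ι j'))
    rw [show (∑ i : Fin n, M i j * M i j')
        = ∑ a : Fin k → Bool, Stmt11.Hh a (ι j) * Stmt11.Hh a (ι j') from this,
      Stmt11.sum_Hh]
    rw [hncast]
    simp [EmbeddingLike.apply_eq_iff_eq]
  refine ⟨n, Stmt11.Tk M, ?_⟩
  -- LHS
  have hL : (∑ i : Fin n, ∑ j : Fin n,
      |Stmt11.Tk M (Pi.single i 1) (Pi.single j 1)| ^ r) = (n : ℝ) * (n : ℝ) := by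
    simp_rw [Stmt11.Tk_single]
    have : ∀ i j : Fin n, |M i j| ^ r = 1 := by
      intro i j; rw [habsM, Real.one_rpow]
    simp_rw [this]
    simp [Finset.sum_const]
  -- sup bound
  set K : ℝ := (n : ℝ) ^ ((3 : ℝ) / 2) with hK
  have hKpos : 0 < K := Real.rpow_pos_of_pos npos _
  have hbound : ∀ x y : Fin n → ℝ, (∀ j, |x j| ≤ 1) → (∀ j, |y j| ≤ 1) →
      |Stmt11.Tk M x y| ≤ K := by
    intro x y hx hy
    set w : Fin n → ℝ := fun i => ∑ j, M i j * y j with hw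
    have hT : Stmt11.Tk M x y = ∑ i, x i * w i := by
      rw [Stmt11.Tk_apply]
      refine Finset.sum_congr rfl fun i _ => ?_
      rw [hw, Finset.mul_sum]
      exact Finset.sum_congr rfl fun j _ => by ring
    have h1 : |Stmt11.Tk M x y| ≤ ∑ i, |w i| := by
      rw [hT]
      calc |∑ i, x i * w i| ≤ ∑ i, |x i * w i| := Finset.abs_sum_le_sum_abs _ _
        _ ≤ ∑ i, |w i| := by
            refine Finset.sum_le_sum fun i _ => ?_
            rw [abs_mul]
            exact mul_le_of_le_one_left (abs_nonneg _) (hx i)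
    have h3 : (∑ i, w i ^ 2) = (n : ℝ) * ∑ j, y j ^ 2 := by
      have expand : ∀ i, w i ^ 2 = ∑ j, ∑ j', (M i j * M i j') * (y j * y j') := by
        intro i
        rw [sq, hw, Finset.sum_mul_sum]
        exact Finset.sum_congr rfl fun j _ => Finset.sum_congr rfl fun j' _ => by ring
      calc (∑ i, w i ^ 2)
          = ∑ i : Fin n, ∑ j, ∑ j', (M i j * M i j') * (y j * y j') := by
            exact Finset.sum_congr rfl fun i _ => expand i
        _ = ∑ j : Fin n, ∑ j' : Fin n, (∑ i, M i j * M i j') * (y j * y j') := by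
            rw [Finset.sum_comm]
            refine Finset.sum_congr rfl fun j _ => ?_
            rw [Finset.sum_comm]
            refine Finset.sum_congr rfl fun j' _ => ?_
            rw [Finset.sum_mul]
        _ = ∑ j : Fin n, (n : ℝ) * (y j * y j) := by
            refine Finset.sum_congr rfl fun j _ => ?_
            simp_rw [horth]
            simp [Finset.sum_ite_eq]
        _ = (n : ℝ) * ∑ j, y j ^ 2 := by
            rw [Finset.mul_sum]
            exact Finset.sum_congr rfl fun j _ => by ring
    have h4 : (∑ j, y j ^ 2) ≤ (n : ℝ) := by
      calc (∑ j, y j ^ 2) ≤ ∑ _j : Fin n, (1 : ℝ) := by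
            refine Finset.sum_le_sum fun j _ => ?_
            rw [← sq_abs]
            exact pow_le_one₀ (abs_nonneg _) (hy j)
        _ = (n : ℝ) := by simp
    have h2 : (∑ i, |w i|) ^ 2 ≤ (n : ℝ) * ∑ i, |w i| ^ 2 := by
      have := sq_sum_le_card_mul_sum_sq (s := Finset.univ) (f := fun i => |w i|)
      simpa using this
    have h5 : (∑ i, |w i|) ^ 2 ≤ K ^ 2 := by
      have hK2 : K ^ 2 = (n : ℝ) * ((n : ℝ) * (n : ℝ)) := by
        rw [hK, sq, ← Real.rpow_add npos]
        norm_num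
        ring
      calc (∑ i, |w i|) ^ 2 ≤ (n : ℝ) * ∑ i, |w i| ^ 2 := h2
        _ = (n : ℝ) * ∑ i, w i ^ 2 := by simp [sq_abs]
        _ = (n : ℝ) * ((n : ℝ) * ∑ j, y j ^ 2) := by rw [h3]
        _ ≤ (n : ℝ) * ((n : ℝ) * (n : ℝ)) := by
            have := mul_le_mul_of_nonneg_left h4 (le_of_lt npos)
            exact mul_le_mul_of_nonneg_left this (le_of_lt npos)
        _ = K ^ 2 := hK2.symm
    have h6 : (∑ i, |w i|) ≤ K := by
      have hnn : 0 ≤ ∑ i, |w i| := Finset.sum_nonneg fun i _ => abs_nonneg _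
      exact (pow_le_pow_iff_left₀ hnn hKpos.le two_ne_zero).mp h5
    exact h1.trans h6
  -- the sup
  haveI : Nonempty {z : (Fin n → ℝ) × (Fin n → ℝ) //
      (∀ j, |z.1 j| ≤ 1) ∧ (∀ j, |z.2 j| ≤ 1)} :=
    ⟨⟨(0, 0), ⟨fun j => by simp, fun j => by simp⟩⟩⟩
  have hsup : (⨆ z : {z : (Fin n → ℝ) × (Fin n → ℝ) //
      (∀ j, |z.1 j| ≤ 1) ∧ (∀ j, |z.2 j| ≤ 1)},
      |Stmt11.Tk M z.1.1 z.1.2|) ≤ K :=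
    ciSup_le fun z => hbound _ _ z.2.1 z.2.2
  -- the key numeric fact : C < n ^ ε
  have hNε : C < (n : ℝ) ^ ε := by
    have e1 : (n : ℝ) ^ ε = (2 : ℝ) ^ ((k : ℝ) * ε) := by
      rw [hncast, ← Real.rpow_natCast 2 k, ← Real.rpow_mul (by norm_num)]
    have e2 : (m : ℝ) ≤ (k : ℝ) * ε := by
      rw [div_le_iff₀ hεpos] at hk; exact hk
    have e3 : (2 : ℝ) ^ ((m : ℝ) : ℝ) ≤ (2 : ℝ) ^ ((k : ℝ) * ε) :=
      (Real.rpow_le_rpow_left_iff one_lt_two).mpr e2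
    have e4 : (m : ℝ) < (2 : ℝ) ^ ((m : ℝ) : ℝ) := by
      rw [Real.rpow_natCast]
      calc (m : ℝ) < ((2 ^ m : ℕ) : ℝ) := by exact_mod_cast (Nat.lt_two_pow_self (n := m))
        _ = (2 : ℝ) ^ m := by push_cast; ring
    rw [e1]
    exact (hm.trans e4).trans_le e3
  -- put everything together
  have hfin : ((n : ℝ) * (n : ℝ)) ^ (1 / r) = (n : ℝ) ^ (2 / r) := by
    rw [show ((n : ℝ) * (n : ℝ)) = (n : ℝ) ^ (2 : ℕ) by ring,
      ← Real.rpow_natCast (n : ℝ) 2, ← Real.rpow_mul npos.le]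
    norm_num
    rw [← div_eq_mul_inv]
  rw [hL, hfin]
  refine lt_of_le_of_lt (mul_le_mul_of_nonneg_left hsup hC) ?_
  calc C * K < (n : ℝ) ^ ε * K := mul_lt_mul_of_pos_right hNε hKpos
    _ = (n : ℝ) ^ (2 / r) := by
        rw [hK, ← Real.rpow_add npos]
        congr 1
        rw [hεdef]; ring
end

section
/- Let m ≥ 1, let 1 ≤ q₁, …, q_m, p ≤ ∞ and 1 ≤ r < ∞. Suppose C ≥ 0 is a constant such that for all σ-finite measure spaces, every m-linear operator S : L^{q₁}(μ₁) × ⋯ × L^{q_m}(μ_m) → L^p(ν) bounded with norm at most M, and all finite families of functions in each slot, the Marcinkiewicz–Zygmund inequality at exponent r holds with constant C·M. Then for every such bounded m-linear operator T (norm at most M), every n ∈ ℕ, all functions {f^i_{kᵢ}}_{kᵢ=1}^{n} ⊂ L^{qᵢ}(μᵢ) and {g^i_{kᵢ}}_{kᵢ=1}^{n} ⊂ L^r[0,1] (i = 1, …, m, with Lebesgue measure on [0,1]), one has ‖( ∫₀¹⋯∫₀¹ | ∑_{k₁,…,k_m=1}^n T(f^1_{k₁},…,f^m_{k_m}) g^1_{k₁}(t₁)⋯g^m_{k_m}(t_m)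 |^r dt₁⋯dt_m )^{1/r}‖_{L^p(ν)} ≤ C · M · ∏_{i=1}^m ‖( ∫₀¹ | ∑_{kᵢ=1}^n f^i_{kᵢ} g^i_{kᵢ}(tᵢ) |^r dtᵢ )^{1/r}‖_{L^{qᵢ}(μᵢ)}. -/
open MeasureTheory ENNReal Function

section Aux
variable {X : Type*} [MeasurableSpace X]

lemma aux_prob_icc : IsProbabilityMeasure ((volume : Measure ℝ).restrict (Set.Icc 0 1)) := by
  constructor
  rw [Measure.restrict_apply_univ, Real.volume_Icc]
  norm_num

lemma aux_ae_comp_eval {m : ℕ} (μ : Measure X) [SigmaFinite μ] {φ ψ : X → ℝ} (i : Fin m)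
    (h : φ =ᵐ[μ] ψ) :
    (fun t : Fin m → X => φ (t i)) =ᵐ[Measure.pi fun _ => μ] fun t => ψ (t i) :=
  (Measure.tendsto_eval_ae_ae (μ := fun _ : Fin m => μ) (i := i)).eventually h

lemma aux_lintegral_pi_prod (μ : Measure X) [SigmaFinite μ] :
    ∀ {m : ℕ} (φ : Fin m → X → ℝ≥0∞), (∀ i, Measurable (φ i)) →
      ∫⁻ t : Fin m → X, ∏ i, φ i (t i) ∂(Measure.pi fun _ => μ) = ∏ i, ∫⁻ x, φ i x ∂μ
  | 0, φ, _ => by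
      simp [lintegral_const, Measure.pi_univ]
  | (m + 1), φ, hφ => by
      have hmp := (measurePreserving_piFinSuccAbove (fun _ : Fin (m + 1) => μ) 0).symm
      rw [hmp.lintegral_map_equiv (fun t => ∏ i, φ i (t i))]
      have : ∀ z : X × (Fin m → X),
          (∏ i, φ i ((MeasurableEquiv.piFinSuccAbove (fun _ => X) 0).symm z i))
            = φ 0 z.1 * ∏ i : Fin m, φ i.succ (z.2 i) := by
        intro z
        simp [MeasurableEquiv.piFinSuccAbove_symm_apply, Fin.prod_univ_succ, Fin.zero_succAbove]
      simp_rw [this]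
      rw [lintegral_prod_mul (f := φ 0) (g := fun y : Fin m → X => ∏ i, φ i.succ (y i)) (hφ 0).aemeasurable
        (Measurable.aemeasurable (by
          exact Finset.measurable_prod _ fun i _ => (hφ i.succ).comp (measurable_pi_apply i)))]
      rw [aux_lintegral_pi_prod μ (fun i => φ i.succ) (fun i => hφ i.succ)]
      rw [Fin.prod_univ_succ]

end Aux

section Aux2
variable {X : Type*} [MeasurableSpace X]

lemma aux_eLpNorm_pi_prod_s13 {m : ℕ} (μ : Measure X) [IsProbabilityMeasure μ] {r : ℝ≥0∞}
    (hr0 : r ≠ 0) (hrt : r ≠ ∞) (φ : Fin m → X → ℝ)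
    (hφ : ∀ i, AEStronglyMeasurable (φ i) μ) :
    eLpNorm (fun t : Fin m → X => ∏ i, φ i (t i)) r (Measure.pi fun _ => μ)
      = ∏ i, eLpNorm (φ i) r μ := by
  -- reduce to measurable representatives
  set ψ : Fin m → X → ℝ := fun i => (hφ i).mk (φ i) with hψdef
  have hψm : ∀ i, Measurable (ψ i) := fun i => (hφ i).measurable_mk
  have hae : ∀ i, φ i =ᵐ[μ] ψ i := fun i => (hφ i).ae_eq_mk
  have h1 : (fun t : Fin m → X => ∏ i, φ i (t i))
      =ᵐ[Measure.pi fun _ => μ] fun t => ∏ i, ψ i (t i) := by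
    have : ∀ᵐ t : Fin m → X ∂(Measure.pi fun _ => μ), ∀ i, φ i (t i) = ψ i (t i) :=
      (ae_all_iff).2 fun i => aux_ae_comp_eval μ i (hae i)
    filter_upwards [this] with t ht
    exact Finset.prod_congr rfl fun i _ => ht i
  rw [eLpNorm_congr_ae h1]
  have h2 : ∏ i, eLpNorm (φ i) r μ = ∏ i, eLpNorm (ψ i) r μ :=
    Finset.prod_congr rfl fun i _ => eLpNorm_congr_ae (hae i)
  rw [h2]
  rw [eLpNorm_eq_lintegral_rpow_enorm_toReal hr0 hrt]
  have h3 : ∏ i, eLpNorm (ψ i) r μ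
      = ∏ i, (∫⁻ x, ‖ψ i x‖ₑ ^ r.toReal ∂μ) ^ (1 / r.toReal) :=
    Finset.prod_congr rfl fun i _ => eLpNorm_eq_lintegral_rpow_enorm_toReal hr0 hrt
  rw [h3]
  have key : ∫⁻ t : Fin m → X, ‖∏ i, ψ i (t i)‖ₑ ^ r.toReal
      ∂(Measure.pi fun _ => μ) = ∏ i, ∫⁻ x, ‖ψ i x‖ₑ ^ r.toReal ∂μ := by
    rw [← aux_lintegral_pi_prod μ (fun i x => ‖ψ i x‖ₑ ^ r.toReal)
      (fun i => ((hψm i).enorm).pow_const _)]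
    congr 1
    funext t
    simp only [enorm_eq_nnnorm, nnnorm_prod, ENNReal.coe_finset_prod,
      ← ENNReal.prod_rpow_of_nonneg toReal_nonneg]
  rw [key, ← ENNReal.prod_rpow_of_nonneg (by positivity)]

lemma aux_memLp_pi_prod {m : ℕ} (μ : Measure X) [IsProbabilityMeasure μ] {r : ℝ≥0∞}
    (hr0 : r ≠ 0) (hrt : r ≠ ∞) (φ : Fin m → X → ℝ)
    (hφ : ∀ i, MemLp (φ i) r μ) :
    MemLp (fun t : Fin m → X => ∏ i, φ i (t i)) r (Measure.pi fun _ => μ) := by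
  have haesm : ∀ i, AEStronglyMeasurable (fun t : Fin m → X => φ i (t i))
      (Measure.pi fun _ => μ) := by
    intro i
    refine ⟨fun t => (hφ i).1.mk (φ i) (t i), ?_, ?_⟩
    · exact (((hφ i).1.measurable_mk).comp (measurable_pi_apply i)).stronglyMeasurable
    · exact aux_ae_comp_eval μ i (hφ i).1.ae_eq_mk
  constructor
  · exact Finset.aestronglyMeasurable_fun_prod _ fun i _ => haesm i
  · rw [aux_eLpNorm_pi_prod_s13 μ hr0 hrt φ fun i => (hφ i).1]
    exact ENNReal.prod_lt_top fun i _ => (hφ i).2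

lemma aux_rpow_integral_eq {α : Type*} [MeasurableSpace α] (ρ : Measure α) {r : ℝ≥0∞}
    (hr0 : r ≠ 0) (hrt : r ≠ ∞) {F : α → ℝ} (hF : MemLp F r ρ) :
    (∫ t, |F t| ^ r.toReal ∂ρ) ^ (1 / r.toReal) = (eLpNorm F r ρ).toReal := by
  rw [hF.eLpNorm_eq_integral_rpow_norm hr0 hrt, ENNReal.toReal_ofReal, one_div]
  · simp_rw [Real.norm_eq_abs]
  · refine Real.rpow_nonneg (integral_nonneg fun t => ?_) _
    positivity

end Aux2

section Aux3

lemma aux_ae_finset_sum {α : Type*} [MeasurableSpace α] {ρ : MeasureTheory.Measure α}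
    {ι : Type*} (s : Finset ι) {F G : ι → α → ℝ} (h : ∀ k ∈ s, F k =ᵐ[ρ] G k) :
    (fun x => ∑ k ∈ s, F k x) =ᵐ[ρ] fun x => ∑ k ∈ s, G k x := by
  classical
  induction s using Finset.induction_on with
  | empty => simp
  | @insert a s ha ih =>
      have h1 := h a (Finset.mem_insert_self a s)
      have h2 := ih fun k hk => h k (Finset.mem_insert_of_mem hk)
      filter_upwards [h1, h2] with x hx1 hx2
      simp [Finset.sum_insert ha, hx1, hx2]

lemma aux_integral_comp_fintype {α β : Type*} [MeasurableSpace α] (ρ : MeasureTheory.Measure α)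
    [MeasureTheory.IsFiniteMeasure ρ] [DecidableEq β] (J : Finset β) (V : α → β)
    (hV : ∀ t, V t ∈ J) (hVm : ∀ v, MeasurableSet (V ⁻¹' {v})) (φ : β → ℝ) :
    ∫ t, φ (V t) ∂ρ = ∑ v ∈ J, (ρ (V ⁻¹' {v})).toReal * φ v := by
  have hfun : (fun t => φ (V t))
      = fun t => ∑ v ∈ J, Set.indicator (V ⁻¹' {v}) (fun _ => φ v) t := by
    funext t
    rw [Finset.sum_eq_single_of_mem (V t) (hV t)]
    · rw [Set.indicator_of_mem (by simp : t ∈ V ⁻¹' {V t})]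
    · intro b _ hb
      refine Set.indicator_of_notMem ?_ _
      simp only [Set.mem_preimage, Set.mem_singleton_iff]
      exact fun h => hb h.symm
  rw [hfun, MeasureTheory.integral_finset_sum]
  · refine Finset.sum_congr rfl fun v _ => ?_
    rw [MeasureTheory.integral_indicator_const _ (hVm v), smul_eq_mul]
    rfl
  · exact fun v _ => (MeasureTheory.integrable_const (φ v)).indicator (hVm v)

end Aux3
section Multi
variable {m : ℕ} {Ω : Fin m → Type} [∀ i, MeasurableSpace (Ω i)]
  {μ : ∀ i, Measure (Ω i)} {Ω' : Type} [MeasurableSpace Ω'] {ν : Measure Ω'}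
  {q : Fin m → ℝ≥0∞} {p : ℝ≥0∞} {T : (∀ i, Ω i → ℝ) → Ω' → ℝ} {M : ℝ}

lemma aux_slot_zero (hT : IsBddMultilinear μ ν q p T M) (f : ∀ i, Ω i → ℝ)
    (hf : ∀ j, MemLp (f j) (q j) (μ j)) (i : Fin m) :
    T (update f i fun _ => 0) =ᵐ[ν] fun _ => 0 := by
  have h0 : MemLp (fun _ : Ω i => (0 : ℝ)) (q i) (μ i) := MemLp.zero'
  have h := hT.multilinear f hf i 1 (fun _ => 0) (fun _ => 0) h0 h0
  have e : (fun _ : Ω i => (1 : ℝ) * 0 + 0) = fun _ => (0 : ℝ) := by funext x; ring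
  rw [e] at h
  filter_upwards [h] with ω hω
  rw [one_mul] at hω
  simpa using by linarith [hω]

lemma aux_sum_slot (hT : IsBddMultilinear μ ν q p T M) (f : ∀ i, Ω i → ℝ)
    (hf : ∀ j, MemLp (f j) (q j) (μ j)) (i : Fin m) {ι : Type*} [DecidableEq ι]
    (s : Finset ι) (b : ι → ℝ) (φ : ι → Ω i → ℝ) (hφ : ∀ k, MemLp (φ k) (q i) (μ i)) :
    T (update f i fun x => ∑ k ∈ s, b k * φ k x) =ᵐ[ν]
      fun ω => ∑ k ∈ s, b k * T (update f i (φ k)) ω := by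
  induction s using Finset.induction_on with
  | empty =>
      simp only [Finset.sum_empty]
      exact aux_slot_zero hT f hf i
  | @insert a s ha ih =>
      have hsum : MemLp (fun x => ∑ k ∈ s, b k * φ k x) (q i) (μ i) :=
        memLp_finset_sum s fun k _ => (hφ k).const_mul (b k)
      have h := hT.multilinear f hf i (b a) (φ a) (fun x => ∑ k ∈ s, b k * φ k x) (hφ a) hsum
      have e : (fun x => b a * φ a x + ∑ k ∈ s, b k * φ k x)
          = fun x => ∑ k ∈ insert a s, b k * φ k x := by
        funext x; rw [Finset.sum_insert ha]
      rw [e] at h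
      refine h.trans ?_
      filter_upwards [ih] with ω hω
      rw [Finset.sum_insert ha, ← hω]

lemma aux_expand (hT : IsBddMultilinear μ ν q p T M) (n : ℕ) [NeZero n]
    (f : ∀ i, Fin n → Ω i → ℝ) (hf : ∀ i k, MemLp (f i k) (q i) (μ i))
    (a : ∀ i, Fin n → ℝ) :
    T (fun i => fun x => ∑ k, a i k * f i k x) =ᵐ[ν]
      fun ω => ∑ k : Fin m → Fin n, (∏ i, a i (k i)) * T (fun i => f i (k i)) ω := by
  classical
  set SS : ∀ i, Ω i → ℝ := fun i => fun x => ∑ k, a i k * f i k x with hSS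
  have key : ∀ s : Finset (Fin m), ∀ G : ∀ i, Ω i → ℝ, (∀ i, MemLp (G i) (q i) (μ i)) →
      T (fun i => if i ∈ s then SS i else G i) =ᵐ[ν]
        fun ω => ∑ k ∈ Fintype.piFinset
            (fun i => if i ∈ s then (Finset.univ : Finset (Fin n)) else {0}),
          (∏ i ∈ s, a i (k i)) * T (fun i => if i ∈ s then f i (k i) else G i) ω := by
    intro s
    induction s using Finset.induction_on with
    | empty =>
        intro G hG
        have hpi : Fintype.piFinset (fun _ : Fin m => ({0} : Finset (Fin n)))
            = {fun _ => 0} := by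
          ext k
          simp [Fintype.mem_piFinset, funext_iff]
        simp only [Finset.notMem_empty, if_false, Finset.prod_empty, one_mul]
        simp only [hpi, Finset.sum_singleton]
        exact Filter.EventuallyEq.rfl
    | @insert j s hj ih =>
        intro G hG
        set B : ∀ i, Ω i → ℝ := fun i => if i ∈ s then SS i else G i with hB
        have hSSmem : ∀ i, MemLp (SS i) (q i) (μ i) := fun i =>
          memLp_finset_sum _ fun k _ => (hf i k).const_mul _
        have hBmem : ∀ i, MemLp (B i) (q i) (μ i) := by
          intro i
          by_cases h : i ∈ s
          · simpa [hB, h] using hSSmem i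
          · simpa [hB, h] using hG i
        have harg : (fun i => if i ∈ insert j s then SS i else G i) = update B j (SS j) := by
          funext i
          rcases eq_or_ne i j with rfl | hij
          · simp [update_self]
          · simp [update_of_ne hij, hB, Finset.mem_insert, hij]
        have hstep := aux_sum_slot hT B hBmem j Finset.univ (a j) (f j) (hf j)
        have hk : ∀ k : Fin n, T (update B j (f j k)) =ᵐ[ν]
            fun ω => ∑ k' ∈ Fintype.piFinset
                (fun i => if i ∈ s then (Finset.univ : Finset (Fin n)) else {0}),
              (∏ i ∈ s, a i (k' i)) *
                T (fun i => if i ∈ s then f i (k' i) else update G j (f j k) i) ω := by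
          intro k
          have hGk : ∀ i, MemLp (update G j (f j k) i) (q i) (μ i) := by
            intro i
            rcases eq_or_ne i j with rfl | hij
            · rw [update_self]; exact hf i k
            · rw [update_of_ne hij]; exact hG i
          have hthis := ih (update G j (f j k)) hGk
          have harg2 : (fun i => if i ∈ s then SS i else update G j (f j k) i)
              = update B j (f j k) := by
            funext i
            rcases eq_or_ne i j with rfl | hij
            · simp [update_self, hB, hj]
            · simp [update_of_ne hij, hB]
          rw [harg2] at hthis
          exact hthis
        have hcomb : T (update B j (SS j)) =ᵐ[ν]
            fun ω => ∑ k : Fin n, a j k * ∑ k' ∈ Fintype.piFinset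
                (fun i => if i ∈ s then (Finset.univ : Finset (Fin n)) else {0}),
              (∏ i ∈ s, a i (k' i)) *
                T (fun i => if i ∈ s then f i (k' i) else update G j (f j k) i) ω := by
          refine hstep.trans ?_
          exact aux_ae_finset_sum Finset.univ fun k _ =>
            (hk k).mono fun ω hω => by dsimp only at hω ⊢; rw [hω]
        rw [harg]
        refine hcomb.trans (Filter.EventuallyEq.of_eq ?_)
        funext ω
        simp only [Finset.mul_sum]
        rw [← Finset.sum_product']
        refine (Finset.sum_bij' (fun z (_ : z ∈ Finset.univ ×ˢ Fintype.piFinset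
            (fun i => if i ∈ s then (Finset.univ : Finset (Fin n)) else {0})) => update z.2 j z.1)
          (fun k'' _ => (k'' j, update k'' j 0)) ?_ ?_ ?_ ?_ ?_)
        · -- maps into piFinset (insert)
          intro z hz
          rw [Fintype.mem_piFinset]
          intro i
          rcases eq_or_ne i j with rfl | hij
          · simp [update_self]
          · rw [update_of_ne hij]
            have hz2 := (Finset.mem_product.1 hz).2
            rw [Fintype.mem_piFinset] at hz2
            have := hz2 i
            simpa [Finset.mem_insert, hij] using this
        · -- reverse map into product
          intro k'' hk''
          rw [Fintype.mem_piFinset] at hk''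
          rw [Finset.mem_product]
          constructor
          · exact Finset.mem_univ _
          · rw [Fintype.mem_piFinset]
            intro i
            rcases eq_or_ne i j with rfl | hij
            · simp [update_self, hj]
            · show update k'' j 0 i ∈ if i ∈ s then Finset.univ else {0}
              rw [update_of_ne hij]
              have := hk'' i
              simpa [Finset.mem_insert, hij] using this
        · -- left inverse
          intro z hz
          have hz2 := (Finset.mem_product.1 hz).2
          rw [Fintype.mem_piFinset] at hz2
          have hzj : z.2 j = 0 := by simpa [hj] using hz2 j
          refine Prod.ext ?_ ?_
          · simp
          · show update (update z.2 j z.1) j 0 = z.2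
            rw [Function.update_idem]
            rw [show (0 : Fin n) = z.2 j from hzj.symm]
            exact Function.update_eq_self j z.2
        · -- right inverse
          intro k'' hk''
          dsimp only
          show update (update k'' j 0) j (k'' j) = k''
          rw [Function.update_idem]
          exact Function.update_eq_self j k''
        · -- values
          intro z hz
          have hz2 := (Finset.mem_product.1 hz).2
          rw [Fintype.mem_piFinset] at hz2
          have h1 : ∏ i ∈ insert j s, a i (update z.2 j z.1 i)
              = a j z.1 * ∏ i ∈ s, a i (z.2 i) := by
            rw [Finset.prod_insert hj, update_self]
            congr 1
            refine Finset.prod_congr rfl fun i hi => ?_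
            rw [update_of_ne (fun h => hj (by rw [← h]; exact hi))]
          have h2 : (fun i => if i ∈ insert j s then f i (update z.2 j z.1 i) else G i)
              = fun i => if i ∈ s then f i (z.2 i) else update G j (f j z.1) i := by
            funext i
            rcases eq_or_ne i j with rfl | hij
            · simp [update_self, hj]
            · rw [update_of_ne hij, update_of_ne hij]
              simp [Finset.mem_insert, hij]
          rw [h1, h2, mul_assoc]

  have h := key Finset.univ (fun i => fun _ => 0) (fun i => MemLp.zero')
  simp only [Finset.mem_univ, if_true, Fintype.piFinset_univ] at h
  exact h

end Multi
section NormForm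
variable {α : Type*} [MeasurableSpace α] {ρ : Measure α} {r : ℝ≥0∞}

lemma aux_coeFn_sum {ι : Type*} (s : Finset ι) (F : ι → Lp ℝ r ρ) :
    (↑↑(∑ k ∈ s, F k) : α → ℝ) =ᵐ[ρ] fun t => ∑ k ∈ s, (F k : α → ℝ) t := by
  classical
  induction s using Finset.induction_on with
  | empty =>
      simp only [Finset.sum_empty]
      filter_upwards [Lp.coeFn_zero ℝ r ρ] with t ht
      simpa using ht
  | @insert a s ha ih =>
      simp only [Finset.sum_insert ha]
      filter_upwards [Lp.coeFn_add (F a) (∑ k ∈ s, F k), ih] with t ht1 ht2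
      simp only [ht1, Pi.add_apply, ht2]

lemma aux_norm_formulation (hr1 : 1 ≤ r) (hrt : r ≠ ∞)
    {ι : Type*} [Fintype ι] (d : ι → ℝ) (φ : ι → α → ℝ) (hφ : ∀ k, MemLp (φ k) r ρ) :
    (∫ t, |∑ k, d k * φ k t| ^ r.toReal ∂ρ) ^ (1 / r.toReal)
      = ‖∑ k, d k • (hφ k).toLp (φ k)‖ := by
  have hr0 : r ≠ 0 := fun h => by simp [h] at hr1
  have hsum : MemLp (fun t => ∑ k, d k * φ k t) r ρ :=
    memLp_finset_sum _ fun k _ => (hφ k).const_mul (d k)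
  rw [aux_rpow_integral_eq ρ hr0 hrt hsum, Lp.norm_def]
  congr 1
  refine eLpNorm_congr_ae (Filter.EventuallyEq.symm ?_)
  have h2 : ∀ k : ι, (↑↑(d k • (hφ k).toLp (φ k)) : α → ℝ) =ᵐ[ρ] fun t => d k * φ k t := by
    intro k
    filter_upwards [Lp.coeFn_smul (d k) ((hφ k).toLp (φ k)), (hφ k).coeFn_toLp] with t ht1 ht2
    rw [ht1, Pi.smul_apply, smul_eq_mul, ht2]
  have h3 : ∀ᵐ t ∂ρ, ∀ k : ι, (↑↑(d k • (hφ k).toLp (φ k)) : α → ℝ) t = d k * φ k t :=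
    ae_all_iff.2 h2
  filter_upwards [aux_coeFn_sum Finset.univ (fun k => d k • (hφ k).toLp (φ k)), h3] with t ht1 ht2
  rw [ht1]
  exact Finset.sum_congr rfl fun k _ => ht2 k

lemma aux_norm_lipschitz {V : Type*} [NormedAddCommGroup V] [NormedSpace ℝ V]
    {ι : Type*} [Fintype ι] (d : ι → ℝ) (u w : ι → V) :
    |‖∑ k, d k • u k‖ - ‖∑ k, d k • w k‖| ≤ ∑ k, |d k| * ‖u k - w k‖ := by
  refine (abs_norm_sub_norm_le _ _).trans ?_
  rw [← Finset.sum_sub_distrib]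
  refine (norm_sum_le _ _).trans ?_
  refine Finset.sum_le_sum fun k _ => ?_
  rw [← smul_sub, norm_smul, Real.norm_eq_abs]

lemma aux_aesm_norm {Ω' : Type*} [MeasurableSpace Ω'] {ν : Measure Ω'} {V : Type*}
    [NormedAddCommGroup V] [NormedSpace ℝ V] {ι : Type*} [Fintype ι] (u : ι → V)
    (c : ι → Ω' → ℝ) (hc : ∀ k, AEStronglyMeasurable (c k) ν) :
    AEStronglyMeasurable (fun ω => ‖∑ k, c k ω • u k‖) ν :=
  (Finset.aestronglyMeasurable_fun_sum _ fun k _ =>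
    ((hc k).smul (aestronglyMeasurable_const (b := u k)))).norm

lemma aux_tensor_dist {X : Type*} [MeasurableSpace X] {m : ℕ} (μ : Measure X)
    [IsProbabilityMeasure μ] (hr1 : 1 ≤ r) (hrt : r ≠ ∞)
    (u v : Fin m → X → ℝ) (hu : ∀ i, MemLp (u i) r μ) (hv : ∀ i, MemLp (v i) r μ)
    {B δ : ℝ} (hB : 0 ≤ B) (hδ : 0 ≤ δ)
    (hub : ∀ i, eLpNorm (u i) r μ ≤ ENNReal.ofReal B)
    (hvb : ∀ i, eLpNorm (v i) r μ ≤ ENNReal.ofReal B)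
    (hd : ∀ i, eLpNorm (u i - v i) r μ ≤ ENNReal.ofReal δ) :
    eLpNorm ((fun t : Fin m → X => ∏ i, u i (t i)) - fun t => ∏ i, v i (t i)) r
      (Measure.pi fun _ => μ) ≤ ENNReal.ofReal (↑m * (B ^ (m - 1) * δ)) := by
  classical
  have hr0 : r ≠ 0 := fun h => by simp [h] at hr1
  set mix : ℕ → ∀ _ : Fin m, X → ℝ := fun j i => if (i : ℕ) < j then u i else v i with hmix
  have hmixmem : ∀ j i, MemLp (mix j i) r μ := by
    intro j i
    by_cases h : (i : ℕ) < j
    · simpa [hmix, h] using hu i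
    · simpa [hmix, h] using hv i
  have hmixb : ∀ j i, eLpNorm (mix j i) r μ ≤ ENNReal.ofReal B := by
    intro j i
    by_cases h : (i : ℕ) < j
    · simpa [hmix, h] using hub i
    · simpa [hmix, h] using hvb i
  -- the difference-slot families
  set D : ℕ → (Fin m → X) → ℝ := fun j =>
    if hj : j < m then
      (fun t => ∏ i, (update (mix j) (⟨j, hj⟩ : Fin m) (u ⟨j, hj⟩ - v ⟨j, hj⟩)) i (t i))
    else 0 with hD
  have hupd_mem : ∀ (j : ℕ) (hj : j < m) (i : Fin m),
      MemLp ((update (mix j) (⟨j, hj⟩ : Fin m) (u ⟨j, hj⟩ - v ⟨j, hj⟩)) i) r μ := by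
    intro j hj i
    rcases eq_or_ne i ⟨j, hj⟩ with rfl | hij
    · rw [update_self]; exact (hu _).sub (hv _)
    · rw [update_of_ne hij]; exact hmixmem j i
  have htel : ((fun t : Fin m → X => ∏ i, u i (t i)) - fun t => ∏ i, v i (t i))
      = fun t => ∑ j ∈ Finset.range m, D j t := by
    funext t
    have hW : ∀ j ∈ Finset.range m, D j t
        = (fun j => ∏ i, mix j i (t i)) (j + 1) - (fun j => ∏ i, mix j i (t i)) j := by
      intro j hjr
      have hj : j < m := Finset.mem_range.1 hjr
      set jF : Fin m := ⟨j, hj⟩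
      have e1 : ∀ i, mix (j + 1) i = update (mix j) jF (u jF) i := by
        intro i
        rcases eq_or_ne i jF with rfl | hij
        · simp [hmix, update_self, jF]
        · have hne : (i : ℕ) ≠ j := fun h => hij (Fin.ext h)
          rw [update_of_ne hij]
          simp only [hmix]
          by_cases h : (i : ℕ) < j
          · have h' : (i : ℕ) < j + 1 := by omega
            simp [h, h']
          · have h' : ¬ (i : ℕ) < j + 1 := by omega
            simp [h, h']
      have e2 : ∀ i, mix j i = update (mix j) jF (v jF) i := by
        intro i
        rcases eq_or_ne i jF with rfl | hij
        · simp [hmix, update_self, jF]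
        · rw [update_of_ne hij]
      have hpt : ∀ (w : X → ℝ) (i : Fin m), (update (mix j) jF w) i (t i)
          = update (fun i' => mix j i' (t i')) jF (w (t jF)) i := by
        intro w i
        rcases eq_or_ne i jF with rfl | hij
        · simp
        · rw [update_of_ne hij, update_of_ne hij]
      have pgen : ∀ w : X → ℝ, ∏ i, (update (mix j) jF w) i (t i)
          = w (t jF) * ∏ i ∈ Finset.univ \ {jF}, mix j i (t i) := by
        intro w
        rw [Finset.prod_congr rfl fun i _ => hpt w i]
        exact Finset.prod_update_of_mem (Finset.mem_univ jF) _ _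
      have p1 : ∏ i, mix (j + 1) i (t i)
          = (u jF) (t jF) * ∏ i ∈ Finset.univ \ {jF}, mix j i (t i) := by
        rw [Finset.prod_congr rfl fun i _ => by rw [e1 i], pgen (u jF)]
      have p2 : ∏ i, mix j i (t i)
          = (v jF) (t jF) * ∏ i ∈ Finset.univ \ {jF}, mix j i (t i) := by
        rw [Finset.prod_congr rfl fun i _ => by rw [e2 i], pgen (v jF)]
      have p3 : D j t = (u jF (t jF) - v jF (t jF))
          * ∏ i ∈ Finset.univ \ {jF}, mix j i (t i) := by
        rw [hD]
        simp only [hj, dif_pos]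
        rw [pgen (u jF - v jF)]
        simp [Pi.sub_apply]
      simp only [p3, p1, p2]
      ring
    rw [Finset.sum_congr rfl hW, Finset.sum_range_sub (f := fun j => ∏ i, mix j i (t i))]
    have em : ∏ i, mix m i (t i) = ∏ i, u i (t i) :=
      Finset.prod_congr rfl fun i _ => by simp [hmix, i.isLt]
    have e0 : ∏ i, mix 0 i (t i) = ∏ i, v i (t i) :=
      Finset.prod_congr rfl fun i _ => by simp [hmix]
    rw [em, e0]
    rfl
  rw [htel]
  have hDaesm : ∀ j ∈ Finset.range m, AEStronglyMeasurable (D j) (Measure.pi fun _ => μ) := by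
    intro j hjr
    have hj : j < m := Finset.mem_range.1 hjr
    rw [hD]
    simp only [hj, dif_pos]
    exact (aux_memLp_pi_prod μ hr0 hrt _ (hupd_mem j hj)).1
  have hsum_le : eLpNorm (fun t => ∑ j ∈ Finset.range m, D j t) r (Measure.pi fun _ => μ)
      ≤ ∑ j ∈ Finset.range m, eLpNorm (D j) r (Measure.pi fun _ => μ) := by
    have : (fun t => ∑ j ∈ Finset.range m, D j t) = ∑ j ∈ Finset.range m, D j := by
      funext t; rw [Finset.sum_apply]
    rw [this]
    exact eLpNorm_sum_le hDaesm hr1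
  refine hsum_le.trans ?_
  have hDle : ∀ j ∈ Finset.range m, eLpNorm (D j) r (Measure.pi fun _ => μ)
      ≤ ENNReal.ofReal δ * ENNReal.ofReal B ^ (m - 1) := by
    intro j hjr
    have hj : j < m := Finset.mem_range.1 hjr
    set jF : Fin m := ⟨j, hj⟩
    have : eLpNorm (D j) r (Measure.pi fun _ => μ)
        = ∏ i, eLpNorm ((update (mix j) jF (u jF - v jF)) i) r μ := by
      rw [hD]
      simp only [hj, dif_pos]
      exact aux_eLpNorm_pi_prod_s13 μ hr0 hrt _ fun i => (hupd_mem j hj i).1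
    have hq : ∀ i, eLpNorm ((update (mix j) jF (u jF - v jF)) i) r μ
        = update (fun i' => eLpNorm (mix j i') r μ) jF (eLpNorm (u jF - v jF) r μ) i := by
      intro i
      rcases eq_or_ne i jF with rfl | hij
      · simp
      · rw [update_of_ne hij, update_of_ne hij]
    rw [this, Finset.prod_congr rfl fun i _ => hq i,
      Finset.prod_update_of_mem (Finset.mem_univ jF)]
    refine mul_le_mul' (hd jF) ?_
    refine (Finset.prod_le_pow_card _ _ _ fun i _ => hmixb j i).trans ?_
    rw [← Finset.erase_eq, Finset.card_erase_of_mem (Finset.mem_univ jF), Finset.card_univ,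
      Fintype.card_fin]
  refine (Finset.sum_le_sum hDle).trans ?_
  rw [Finset.sum_const, Finset.card_range, nsmul_eq_mul]
  rw [ENNReal.ofReal_mul (by positivity), ENNReal.ofReal_mul (by positivity),
    ENNReal.ofReal_natCast, ENNReal.ofReal_pow hB]
  rw [mul_comm (ENNReal.ofReal δ) _]

end NormForm
section Est
variable {Ωx : Type*} [MeasurableSpace Ωx] {νx : Measure Ωx} {V : Type*}
  [NormedAddCommGroup V] [NormedSpace ℝ V] {ι : Type*} [Fintype ι]

lemma aux_est_diff (px : ℝ≥0∞) (hpx : 1 ≤ px) (c : ι → Ωx → ℝ)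
    (hc : ∀ k, AEStronglyMeasurable (c k) νx) (u w : ι → V) {D : ℝ} (hD : 0 ≤ D)
    (huw : ∀ k, ‖u k - w k‖ ≤ D) :
    eLpNorm (fun ω => ‖∑ k, c k ω • u k‖) px νx
      ≤ eLpNorm (fun ω => ‖∑ k, c k ω • w k‖) px νx
        + ENNReal.ofReal D * ∑ k, eLpNorm (c k) px νx := by
  classical
  have hpt : ∀ ω, ‖∑ k, c k ω • u k‖ ≤ ‖∑ k, c k ω • w k‖ + ∑ k, ‖c k ω‖ * D := by
    intro ω
    have h1 := aux_norm_lipschitz (fun k => c k ω) u w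
    have h2 : ∑ k, |c k ω| * ‖u k - w k‖ ≤ ∑ k, ‖c k ω‖ * D := by
      refine Finset.sum_le_sum fun k _ => ?_
      rw [Real.norm_eq_abs]
      exact mul_le_mul_of_nonneg_left (huw k) (abs_nonneg _)
    have := (abs_le.1 h1).2
    linarith
  have herr_aesm : AEStronglyMeasurable (fun ω => ∑ k, ‖c k ω‖ * D) νx :=
    Finset.aestronglyMeasurable_fun_sum _ fun k _ => ((hc k).norm.mul_const D)
  have hmain : eLpNorm (fun ω => ‖∑ k, c k ω • u k‖) px νx
      ≤ eLpNorm (fun ω => ‖∑ k, c k ω • w k‖ + ∑ k, ‖c k ω‖ * D) px νx := by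
    refine eLpNorm_mono_real fun ω => ?_
    rw [Real.norm_eq_abs, abs_of_nonneg (norm_nonneg _)]
    exact hpt ω
  refine hmain.trans ?_
  refine (eLpNorm_add_le (aux_aesm_norm w c hc) herr_aesm hpx).trans ?_
  refine add_le_add le_rfl ?_
  have hsplit : (fun ω => ∑ k, ‖c k ω‖ * D) = ∑ k : ι, fun ω => ‖c k ω‖ * D := by
    funext ω; rw [Finset.sum_apply]
  rw [hsplit]
  refine (eLpNorm_sum_le (fun k _ => (hc k).norm.mul_const D) hpx).trans ?_
  rw [Finset.mul_sum]
  refine Finset.sum_le_sum fun k _ => ?_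
  have h1 : (fun ω => ‖c k ω‖ * D) = D • fun ω => ‖c k ω‖ := by
    funext ω; simp [mul_comm]
  rw [h1, eLpNorm_const_smul, eLpNorm_norm]
  rw [Real.enorm_eq_ofReal hD]

lemma aux_est_bound (px : ℝ≥0∞) (hpx : 1 ≤ px) (c : ι → Ωx → ℝ)
    (hc : ∀ k, AEStronglyMeasurable (c k) νx) (u : ι → V) :
    eLpNorm (fun ω => ‖∑ k, c k ω • u k‖) px νx
      ≤ ∑ k, ENNReal.ofReal ‖u k‖ * eLpNorm (c k) px νx := by
  classical
  have hpt : ∀ ω, ‖∑ k, c k ω • u k‖ ≤ ∑ k, ‖c k ω‖ * ‖u k‖ := by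
    intro ω
    refine (norm_sum_le _ _).trans ?_
    refine Finset.sum_le_sum fun k _ => ?_
    rw [norm_smul, Real.norm_eq_abs]
  have hmain : eLpNorm (fun ω => ‖∑ k, c k ω • u k‖) px νx
      ≤ eLpNorm (fun ω => ∑ k, ‖c k ω‖ * ‖u k‖) px νx := by
    refine eLpNorm_mono_real fun ω => ?_
    rw [Real.norm_eq_abs, abs_of_nonneg (norm_nonneg _)]
    exact hpt ω
  refine hmain.trans ?_
  have hsplit : (fun ω => ∑ k, ‖c k ω‖ * ‖u k‖) = ∑ k : ι, fun ω => ‖c k ω‖ * ‖u k‖ := by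
    funext ω; rw [Finset.sum_apply]
  rw [hsplit]
  refine (eLpNorm_sum_le (fun k _ => (hc k).norm.mul_const _) hpx).trans ?_
  refine Finset.sum_le_sum fun k _ => ?_
  have h1 : (fun ω => ‖c k ω‖ * ‖u k‖) = ‖u k‖ • fun ω => ‖c k ω‖ := by
    funext ω; simp [mul_comm]
  rw [h1, eLpNorm_const_smul, eLpNorm_norm]
  rw [Real.enorm_eq_ofReal (norm_nonneg _)]

end Est
/-- If the multilinear Marcinkiewicz–Zygmund inequality at exponent
`r < ∞` holds with uniform constant `C`, then for every bounded multilinear operator `T`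
(norm at most `M`), functions `f^i_k ∈ L^{qᵢ}(μᵢ)` and `g^i_k ∈ L^r[0,1]`, the corresponding
inequality with the `ℓ^r`-sums replaced by `L^r[0,1]`-norms of `∑_k (⋯) g^i_k(t)` holds with
constant `C · M`. -/
theorem statement13 (m : ℕ) (hm : 1 ≤ m) (q : Fin m → ℝ≥0∞) (hq : ∀ i, 1 ≤ q i)
    (p : ℝ≥0∞) (hp : 1 ≤ p) (r : ℝ≥0∞) (hr1 : 1 ≤ r) (hr2 : r ≠ ∞)
    (C : ℝ) (hC : 0 ≤ C) (hMZ : MZprop m q p r C) :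
    ∀ (Ω : Fin m → Type) [∀ i, MeasurableSpace (Ω i)] (μ : ∀ i, Measure (Ω i))
      [∀ i, SigmaFinite (μ i)]
      (Ω' : Type) [MeasurableSpace Ω'] (ν : Measure Ω') [SigmaFinite ν]
      (T : (∀ i, Ω i → ℝ) → Ω' → ℝ) (M : ℝ), 0 ≤ M → IsBddMultilinear μ ν q p T M →
      ∀ (n : ℕ) (f : ∀ i, Fin n → Ω i → ℝ), (∀ i k, MemLp (f i k) (q i) (μ i)) →
      ∀ g : Fin m → Fin n → ℝ → ℝ,
        (∀ i k, MemLp (g i k) r (volume.restrict (Set.Icc (0 : ℝ) 1))) →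
        eLpNorm
            (fun ω =>
              (∫ t : Fin m → ℝ,
                  |∑ k : Fin m → Fin n,
                      T (fun i => f i (k i)) ω * ∏ i, g i (k i) (t i)| ^ r.toReal
                  ∂(Measure.pi fun _ : Fin m => volume.restrict (Set.Icc (0 : ℝ) 1)))
                ^ (1 / r.toReal))
            p ν
          ≤ ENNReal.ofReal (C * M) *
            ∏ i, eLpNorm
              (fun x =>
                (∫ t in Set.Icc (0 : ℝ) 1,
                    |∑ kᵢ : Fin n, f i kᵢ x * g i kᵢ t| ^ r.toReal) ^ (1 / r.toReal))
              (q i) (μ i) := by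
  intro Ω instΩm μ instσ Ω' instΩ' ν instνσ T M hM hT n f hf g hg
  classical
  haveI hprob : IsProbabilityMeasure ((volume : Measure ℝ).restrict (Set.Icc 0 1)) :=
    aux_prob_icc
  have hr0 : r ≠ 0 := fun h => by simp [h] at hr1
  have hrpos : 0 < r.toReal := ENNReal.toReal_pos hr0 hr2
  have hrinv : (1 : ℝ) / r.toReal ≠ 0 := by positivity
  haveI : Fact (1 ≤ r) := ⟨hr1⟩
  rcases Nat.eq_zero_or_pos n with rfl | hn
  · -- trivial case n = 0
    haveI : NeZero m := ⟨by omega⟩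
    haveI : IsEmpty (Fin m → Fin 0) :=
      ⟨fun k => (k ⟨0, by omega⟩).elim0⟩
    have hLHS0 : (fun ω : Ω' =>
        (∫ t : Fin m → ℝ,
            |∑ k : Fin m → Fin 0, T (fun i => f i (k i)) ω * ∏ i, g i (k i) (t i)| ^ r.toReal
            ∂(Measure.pi fun _ : Fin m => volume.restrict (Set.Icc (0 : ℝ) 1)))
          ^ (1 / r.toReal)) = fun _ => (0 : ℝ) := by
      funext ω
      simp [Finset.univ_eq_empty, Real.zero_rpow hrpos.ne', Real.zero_rpow hrinv,
        Real.zero_rpow (inv_ne_zero hrpos.ne')]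
    rw [hLHS0]
    rw [show (fun _ : Ω' => (0 : ℝ)) = (0 : Ω' → ℝ) from rfl, eLpNorm_zero]
    exact zero_le'
  haveI : NeZero n := ⟨hn.ne'⟩
  set lam : Measure ℝ := volume.restrict (Set.Icc (0 : ℝ) 1) with hlam
  set Lam : Measure (Fin m → ℝ) := Measure.pi fun _ : Fin m => lam with hLam
  -- MemLp of products of rows
  have hPm : ∀ (h : Fin m → Fin n → ℝ → ℝ), (∀ i k, MemLp (h i k) r lam) →
      ∀ k : Fin m → Fin n, MemLp (fun t : Fin m → ℝ => ∏ i, h i (k i) (t i)) r Lam :=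
    fun h hh k => aux_memLp_pi_prod lam hr0 hr2 _ fun i => hh i (k i)
  -- norm-form of the LHS function
  have keyL : ∀ (h : Fin m → Fin n → ℝ → ℝ) (hh : ∀ i k, MemLp (h i k) r lam),
      (fun ω => (∫ t : Fin m → ℝ,
          |∑ k : Fin m → Fin n, T (fun i => f i (k i)) ω * ∏ i, h i (k i) (t i)| ^ r.toReal
          ∂Lam) ^ (1 / r.toReal))
        = fun ω => ‖∑ k : Fin m → Fin n,
            T (fun i => f i (k i)) ω • (hPm h hh k).toLp _‖ := by
    intro h hh
    funext ω
    exact aux_norm_formulation hr1 hr2 _ _ _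
  -- norm-form of the RHS factors
  have keyR : ∀ (h : Fin m → Fin n → ℝ → ℝ) (hh : ∀ i k, MemLp (h i k) r lam) (i : Fin m),
      (fun x => (∫ t, |∑ kᵢ : Fin n, f i kᵢ x * h i kᵢ t| ^ r.toReal ∂lam) ^ (1 / r.toReal))
        = fun x => ‖∑ kᵢ : Fin n, f i kᵢ x • (hh i kᵢ).toLp (h i kᵢ)‖ := by
    intro h hh i
    funext x
    exact aux_norm_formulation hr1 hr2 _ _ _
  -- choose simple approximations
  have hex : ∀ (N : ℕ) (i : Fin m) (k : Fin n), ∃ s : SimpleFunc ℝ ℝ,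
      eLpNorm (g i k - ⇑s) r lam < ENNReal.ofReal (1 / (N + 1)) ∧ MemLp (⇑s) r lam := by
    intro N i k
    exact (hg i k).exists_simpleFunc_eLpNorm_sub_lt hr2
      (ENNReal.ofReal_pos.2 (by positivity)).ne'
  choose sN hs1 hs2 using hex
  -- bounds
  set G0 : ℝ := ∑ i, ∑ k, (eLpNorm (g i k) r lam).toReal with hG0
  have hG0nn : 0 ≤ G0 := Finset.sum_nonneg fun i _ =>
    Finset.sum_nonneg fun k _ => ENNReal.toReal_nonneg
  have hG0i : ∀ i k, (eLpNorm (g i k) r lam).toReal ≤ G0 := by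
    intro i k
    refine le_trans (Finset.single_le_sum (f := fun k => (eLpNorm (g i k) r lam).toReal)
      (fun k _ => ENNReal.toReal_nonneg) (Finset.mem_univ k)) ?_
    exact Finset.single_le_sum (f := fun i => ∑ k, (eLpNorm (g i k) r lam).toReal)
      (fun i _ => Finset.sum_nonneg fun k _ => ENNReal.toReal_nonneg) (Finset.mem_univ i)
  set Bb : ℝ := G0 + 1 with hBb
  have hBbnn : 0 ≤ Bb := by positivity
  have hgB : ∀ i k, eLpNorm (g i k) r lam ≤ ENNReal.ofReal Bb := by
    intro i k
    rw [ENNReal.le_ofReal_iff_toReal_le (hg i k).2.ne (by positivity)]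
    have := hG0i i k
    linarith
  have hepos : ∀ N : ℕ, (0 : ℝ) < 1 / (N + 1) := fun N => by positivity
  have hele1 : ∀ N : ℕ, (1 : ℝ) / (N + 1) ≤ 1 := by
    intro N
    rw [div_le_one (by positivity)]
    have : (0 : ℝ) ≤ (N : ℝ) := Nat.cast_nonneg N
    linarith
  have hdist' : ∀ N i k, eLpNorm (g i k - ⇑(sN N i k)) r lam
      ≤ ENNReal.ofReal (1 / (N + 1)) := fun N i k => (hs1 N i k).le
  have hsB : ∀ N i k, eLpNorm (⇑(sN N i k)) r lam ≤ ENNReal.ofReal (Bb + 1) := by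
    intro N i k
    have hid : ⇑(sN N i k) = g i k - (g i k - ⇑(sN N i k)) := by
      funext t; simp
    rw [hid]
    refine (eLpNorm_sub_le (hg i k).1 ((hg i k).sub (hs2 N i k)).1 hr1).trans ?_
    refine le_trans (add_le_add (hgB i k) ((hdist' N i k).trans
      (ENNReal.ofReal_le_ofReal (hele1 N)))) ?_
    rw [← ENNReal.ofReal_add hBbnn zero_le_one]
  -- vector distances
  have hvecdist : ∀ N i k, ‖(hg i k).toLp (g i k) - (hs2 N i k).toLp ⇑(sN N i k)‖
      ≤ 1 / (N + 1) := by
    intro N i k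
    rw [← MemLp.toLp_sub, Lp.norm_toLp]
    exact ENNReal.toReal_le_of_le_ofReal (hepos N).le (hdist' N i k)
  have htens : ∀ N (k : Fin m → Fin n),
      ‖(hPm g hg k).toLp _ - (hPm (fun i k => ⇑(sN N i k)) (fun i k => hs2 N i k) k).toLp _‖
        ≤ ↑m * ((Bb + 1) ^ (m - 1) * (1 / (N + 1))) := by
    intro N k
    rw [← MemLp.toLp_sub, Lp.norm_toLp]
    refine ENNReal.toReal_le_of_le_ofReal (by positivity) ?_
    refine aux_tensor_dist lam hr1 hr2 (fun i => g i (k i)) (fun i => ⇑(sN N i (k i)))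
      (fun i => hg i (k i)) (fun i => hs2 N i (k i)) (by positivity) (hepos N).le
      (fun i => (hgB i (k i)).trans (ENNReal.ofReal_le_ofReal (by linarith)))
      (fun i => hsB N i (k i)) (fun i => hdist' N i (k i))
  -- measurability of the coefficients
  have hcmem : ∀ k : Fin m → Fin n, MemLp (fun ω => T (fun i => f i (k i)) ω) p ν :=
    fun k => hT.memℒp _ fun j => hf j (k j)
  have hcaesm : ∀ k : Fin m → Fin n, AEStronglyMeasurable (fun ω => T (fun i => f i (k i)) ω) ν :=
    fun k => (hcmem k).1
  -- sums of norms
  set Sc : ℝ≥0∞ := ∑ k : Fin m → Fin n, eLpNorm (fun ω => T (fun i => f i (k i)) ω) p ν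
    with hSc
  have hScfin : Sc ≠ ∞ := by
    rw [hSc]
    exact (ENNReal.sum_lt_top.2 fun k _ => (hcmem k).2).ne
  set Sf : Fin m → ℝ≥0∞ := fun i => ∑ k : Fin n, eLpNorm (f i k) (q i) (μ i) with hSf
  have hSffin : ∀ i, Sf i ≠ ∞ := by
    intro i
    rw [hSf]
    exact (ENNReal.sum_lt_top.2 fun k _ => (hf i k).2).ne
  -- the three estimates
  have ESTA : ∀ N : ℕ,
      eLpNorm (fun ω => (∫ t : Fin m → ℝ,
          |∑ k : Fin m → Fin n, T (fun i => f i (k i)) ω * ∏ i, g i (k i) (t i)| ^ r.toReal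
          ∂Lam) ^ (1 / r.toReal)) p ν
        ≤ eLpNorm (fun ω => (∫ t : Fin m → ℝ,
            |∑ k : Fin m → Fin n,
              T (fun i => f i (k i)) ω * ∏ i, (sN N i (k i)) (t i)| ^ r.toReal
            ∂Lam) ^ (1 / r.toReal)) p ν
          + ENNReal.ofReal (↑m * ((Bb + 1) ^ (m - 1) * (1 / (N + 1)))) * Sc := by
    intro N
    rw [keyL g hg, keyL (fun i k => ⇑(sN N i k)) (fun i k => hs2 N i k)]
    exact aux_est_diff p hp _ hcaesm _ _ (by positivity) (htens N)
  have ESTB : ∀ (N : ℕ) (i : Fin m),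
      eLpNorm (fun x => (∫ t, |∑ kᵢ : Fin n, f i kᵢ x * (sN N i kᵢ) t| ^ r.toReal ∂lam)
          ^ (1 / r.toReal)) (q i) (μ i)
        ≤ eLpNorm (fun x => (∫ t, |∑ kᵢ : Fin n, f i kᵢ x * g i kᵢ t| ^ r.toReal ∂lam)
            ^ (1 / r.toReal)) (q i) (μ i)
          + ENNReal.ofReal (1 / (N + 1)) * Sf i := by
    intro N i
    rw [keyR g hg i, keyR (fun i k => ⇑(sN N i k)) (fun i k => hs2 N i k) i]
    refine aux_est_diff (q i) (hq i) _ (fun k => (hf i k).1) _ _ (hepos N).le ?_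
    intro k
    rw [norm_sub_rev]
    exact hvecdist N i k
  have ESTC : ∀ N : ℕ,
      eLpNorm (fun ω => (∫ t : Fin m → ℝ,
          |∑ k : Fin m → Fin n,
            T (fun i => f i (k i)) ω * ∏ i, (sN N i (k i)) (t i)| ^ r.toReal
          ∂Lam) ^ (1 / r.toReal)) p ν
        ≤ ENNReal.ofReal (C * M) *
          ∏ i, eLpNorm (fun x =>
            (∫ t, |∑ kᵢ : Fin n, f i kᵢ x * (sN N i kᵢ) t| ^ r.toReal ∂lam)
              ^ (1 / r.toReal)) (q i) (μ i) := by
    intro N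
    set s : Fin m → Fin n → SimpleFunc ℝ ℝ := sN N with hsdef
    have hsmem : ∀ i k, MemLp (⇑(s i k)) r lam := fun i k => hs2 N i k
    set V : Fin m → ℝ → (Fin n → ℝ) := fun i t k => s i k t with hV
    set J : Fin m → Finset (Fin n → ℝ) := fun i => Fintype.piFinset fun k => (s i k).range
      with hJ
    have hVJ : ∀ i t, V i t ∈ J i := by
      intro i t
      simp only [hJ, hV, Fintype.mem_piFinset]
      exact fun k => SimpleFunc.mem_range_self _ t
    have hVmeas : ∀ i v, MeasurableSet (V i ⁻¹' {v}) := by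
      intro i v
      have hset : V i ⁻¹' {v} = ⋂ k, (s i k) ⁻¹' {v k} := by
        ext t
        simp [hV, funext_iff]
      rw [hset]
      exact MeasurableSet.iInter fun k => (s i k).measurableSet_fiber _
    set w : ∀ _ : Fin m, (Fin n → ℝ) → ℝ := fun i v => (lam (V i ⁻¹' {v})).toReal ^ (1 / r.toReal)
      with hw
    have hwnn : ∀ i v, 0 ≤ w i v := fun i v => Real.rpow_nonneg ENNReal.toReal_nonneg _
    have hwpow : ∀ i v, (w i v) ^ r.toReal = (lam (V i ⁻¹' {v})).toReal := by
      intro i v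
      simp only [hw]
      rw [← Real.rpow_mul ENNReal.toReal_nonneg, one_div, inv_mul_cancel₀ hrpos.ne',
        Real.rpow_one]
    set ft : ∀ i : Fin m, (Fin n → ℝ) → Ω i → ℝ := fun i v x => w i v * ∑ k, v k * f i k x
      with hft
    have hftmem : ∀ i v, MemLp (ft i v) (q i) (μ i) := fun i v =>
      (memLp_finset_sum Finset.univ fun k _ => (hf i k).const_mul (v k)).const_mul (w i v)
    set Nn : Fin m → ℕ := fun i => (J i).card with hNn
    set e : ∀ i : Fin m, Fin (Nn i) ≃ {v // v ∈ J i} := fun i => (J i).equivFin.symm with he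
    set F : ∀ i, Fin (Nn i) → Ω i → ℝ := fun i κ => ft i ((e i κ) : Fin n → ℝ) with hF
    have hFmem : ∀ i κ, MemLp (F i κ) (q i) (μ i) := fun i κ => hftmem i _
    have hmz : eLpNorm (fun ω => lrNorm r fun κ : ∀ i, Fin (Nn i) =>
          T (fun i => F i (κ i)) ω) p ν
        ≤ ENNReal.ofReal (C * M) *
          ∏ i, eLpNorm (fun x => lrNorm r fun κ : Fin (Nn i) => F i κ x) (q i) (μ i) :=
      hMZ Ω μ Ω' ν T M hM hT Nn F hFmem
    -- bridge for the right-hand side factors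
    have bridgeR : ∀ i : Fin m,
        (fun x => lrNorm r fun κ : Fin (Nn i) => F i κ x)
          = fun x => (∫ t, |∑ kᵢ : Fin n, f i kᵢ x * (s i kᵢ) t| ^ r.toReal ∂lam)
              ^ (1 / r.toReal) := by
      intro i
      funext x
      unfold lrNorm
      rw [if_neg hr2]
      congr 1
      have h1 : ∑ κ : Fin (Nn i), |F i κ x| ^ r.toReal
          = ∑ v ∈ J i, |ft i v x| ^ r.toReal := by
        rw [← Finset.sum_coe_sort (J i) (fun v => |ft i (v : Fin n → ℝ) x| ^ r.toReal)]
        exact Fintype.sum_equiv (e i) _ _ fun κ => rfl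
      rw [h1]
      have h2 : ∀ v ∈ J i, |ft i v x| ^ r.toReal
          = (lam (V i ⁻¹' {v})).toReal * |∑ k : Fin n, f i k x * v k| ^ r.toReal := by
        intro v _
        simp only [hft]
        rw [abs_mul, abs_of_nonneg (hwnn i v), Real.mul_rpow (hwnn i v) (abs_nonneg _),
          hwpow i v]
        have hcm : ∑ k : Fin n, v k * f i k x = ∑ k : Fin n, f i k x * v k :=
          Finset.sum_congr rfl fun k _ => mul_comm _ _
        rw [hcm]
      rw [Finset.sum_congr rfl h2,
        ← aux_integral_comp_fintype lam (J i) (V i) (hVJ i) (hVmeas i)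
          (fun v => |∑ k : Fin n, f i k x * v k| ^ r.toReal)]
    -- a.e. expansion of T on the tilde families
    have hexpv : ∀ v : Fin m → (Fin n → ℝ), T (fun i => ft i (v i)) =ᵐ[ν]
        fun ω => (∏ i, w i (v i)) *
          ∑ k : Fin m → Fin n, (∏ i, (v i) (k i)) * T (fun i => f i (k i)) ω := by
      intro v
      have h1 : (fun i => ft i (v i))
          = fun i => fun x => ∑ k, (w i (v i) * (v i) k) * f i k x := by
        funext i x
        simp only [hft]
        rw [Finset.mul_sum]
        exact Finset.sum_congr rfl fun k _ => by ring
      rw [h1]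
      refine (aux_expand hT n f hf fun i k => w i (v i) * (v i) k).trans
        (Filter.EventuallyEq.of_eq ?_)
      funext ω
      rw [Finset.mul_sum]
      refine Finset.sum_congr rfl fun k _ => ?_
      rw [Finset.prod_mul_distrib]
      ring
    have hexp : ∀ᵐ ω ∂ν, ∀ v : {v // v ∈ Fintype.piFinset J}, T (fun i => ft i (v.1 i)) ω
        = (∏ i, w i (v.1 i)) *
          ∑ k : Fin m → Fin n, (∏ i, (v.1 i) (k i)) * T (fun i => f i (k i)) ω :=
      ae_all_iff.2 fun v => hexpv v.1
    -- measure of joint fibers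
    haveI hLamProb : IsProbabilityMeasure Lam := by
      rw [hLam]; infer_instance
    have hVmJ : ∀ t : Fin m → ℝ, (fun i => V i (t i)) ∈ Fintype.piFinset J :=
      fun t => Fintype.mem_piFinset.2 fun i => hVJ i (t i)
    have hVmmeas : ∀ v : Fin m → (Fin n → ℝ),
        MeasurableSet ((fun t : Fin m → ℝ => fun i => V i (t i)) ⁻¹' {v}) := by
      intro v
      have hset : (fun t : Fin m → ℝ => fun i => V i (t i)) ⁻¹' {v}
          = ⋂ i, (fun t : Fin m → ℝ => t i) ⁻¹' (V i ⁻¹' {v i}) := by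
        ext t
        simp [funext_iff]
      rw [hset]
      exact MeasurableSet.iInter fun i => (hVmeas i (v i)).preimage (measurable_pi_apply i)
    have hLamA : ∀ v : Fin m → (Fin n → ℝ),
        (Lam ((fun t : Fin m → ℝ => fun i => V i (t i)) ⁻¹' {v})).toReal
          = ∏ i, (lam (V i ⁻¹' {v i})).toReal := by
      intro v
      have hset : (fun t : Fin m → ℝ => fun i => V i (t i)) ⁻¹' {v}
          = Set.pi Set.univ fun i => V i ⁻¹' {v i} := by
        ext t
        simp [funext_iff, Set.mem_pi]
      rw [hset, hLam, Measure.pi_pi, ENNReal.toReal_prod]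
    -- bridge for the left-hand side
    have bridgeL : (fun ω => lrNorm r fun κ : ∀ i, Fin (Nn i) => T (fun i => F i (κ i)) ω)
        =ᵐ[ν] fun ω => (∫ t : Fin m → ℝ,
            |∑ k : Fin m → Fin n,
              T (fun i => f i (k i)) ω * ∏ i, (s i (k i)) (t i)| ^ r.toReal
            ∂Lam) ^ (1 / r.toReal) := by
      filter_upwards [hexp] with ω hω
      unfold lrNorm
      rw [if_neg hr2]
      congr 1
      have hstep1 : ∑ κ : ∀ i, Fin (Nn i), |T (fun i => F i (κ i)) ω| ^ r.toReal
          = ∑ v ∈ Fintype.piFinset J, |T (fun i => ft i (v i)) ω| ^ r.toReal := by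
        refine Finset.sum_bij'
          (i := fun (κ : ∀ i, Fin (Nn i)) (_ : κ ∈ Finset.univ) =>
            fun i => ((e i) (κ i) : Fin n → ℝ))
          (j := fun v hv => fun i => (e i).symm ⟨v i, Fintype.mem_piFinset.1 hv i⟩)
          ?_ ?_ ?_ ?_ ?_
        · intro κ _
          exact Fintype.mem_piFinset.2 fun i => (e i (κ i)).2
        · intro v hv
          exact Finset.mem_univ _
        · intro κ _
          funext i
          simp
        · intro v hv
          funext i
          simp
        · intro κ _
          rfl
      rw [hstep1]
      have hstep2 : ∀ v ∈ Fintype.piFinset J, |T (fun i => ft i (v i)) ω| ^ r.toReal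
          = (Lam ((fun t : Fin m → ℝ => fun i => V i (t i)) ⁻¹' {v})).toReal
            * |∑ k : Fin m → Fin n,
                T (fun i => f i (k i)) ω * ∏ i, (v i) (k i)| ^ r.toReal := by
        intro v hv
        rw [hω ⟨v, hv⟩]
        have hprodnn : 0 ≤ ∏ i, w i (v i) :=
          Finset.prod_nonneg fun i _ => hwnn i (v i)
        rw [abs_mul, abs_of_nonneg hprodnn, Real.mul_rpow hprodnn (abs_nonneg _)]
        rw [← Real.finset_prod_rpow Finset.univ _ (fun i _ => hwnn i (v i)) r.toReal]
        have hww : ∏ i, (w i (v i)) ^ r.toReal = ∏ i, (lam (V i ⁻¹' {v i})).toReal :=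
          Finset.prod_congr rfl fun i _ => hwpow i (v i)
        rw [hww, ← hLamA v]
        have hcm : ∑ k : Fin m → Fin n, (∏ i, (v i) (k i)) * T (fun i => f i (k i)) ω
            = ∑ k : Fin m → Fin n, T (fun i => f i (k i)) ω * ∏ i, (v i) (k i) :=
          Finset.sum_congr rfl fun k _ => mul_comm _ _
        rw [hcm]
      rw [Finset.sum_congr rfl hstep2,
        ← aux_integral_comp_fintype Lam (Fintype.piFinset J)
          (fun t : Fin m → ℝ => fun i => V i (t i)) hVmJ hVmmeas
          (fun v => |∑ k : Fin m → Fin n,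
            T (fun i => f i (k i)) ω * ∏ i, (v i) (k i)| ^ r.toReal)]
    calc eLpNorm (fun ω => (∫ t : Fin m → ℝ,
          |∑ k : Fin m → Fin n,
            T (fun i => f i (k i)) ω * ∏ i, (sN N i (k i)) (t i)| ^ r.toReal
          ∂Lam) ^ (1 / r.toReal)) p ν
        = eLpNorm (fun ω => lrNorm r fun κ : ∀ i, Fin (Nn i) =>
            T (fun i => F i (κ i)) ω) p ν := (eLpNorm_congr_ae bridgeL).symm
      _ ≤ ENNReal.ofReal (C * M) *
            ∏ i, eLpNorm (fun x => lrNorm r fun κ : Fin (Nn i) => F i κ x) (q i) (μ i) := hmz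
      _ = ENNReal.ofReal (C * M) *
            ∏ i, eLpNorm (fun x =>
              (∫ t, |∑ kᵢ : Fin n, f i kᵢ x * (sN N i kᵢ) t| ^ r.toReal ∂lam)
                ^ (1 / r.toReal)) (q i) (μ i) := by
          refine congrArg _ (Finset.prod_congr rfl fun i _ => ?_)
          rw [bridgeR i]

  -- finiteness of the limit factors
  set R : Fin m → ℝ≥0∞ := fun i => eLpNorm (fun x =>
      (∫ t, |∑ kᵢ : Fin n, f i kᵢ x * g i kᵢ t| ^ r.toReal ∂lam) ^ (1 / r.toReal))
      (q i) (μ i) with hR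
  have hRfin : ∀ i, R i ≠ ∞ := by
    intro i
    simp only [hR]
    rw [keyR g hg i]
    refine (lt_of_le_of_lt (aux_est_bound (q i) (hq i) _ (fun k => (hf i k).1) _) ?_).ne
    refine ENNReal.sum_lt_top.2 fun k _ => ?_
    exact ENNReal.mul_lt_top ENNReal.ofReal_lt_top (hf i k).2
  -- combine the three estimates
  have hchain : ∀ N : ℕ,
      eLpNorm (fun ω => (∫ t : Fin m → ℝ,
          |∑ k : Fin m → Fin n, T (fun i => f i (k i)) ω * ∏ i, g i (k i) (t i)| ^ r.toReal
          ∂Lam) ^ (1 / r.toReal)) p ν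
        ≤ ENNReal.ofReal (C * M) * ∏ i, (R i + ENNReal.ofReal (1 / (N + 1)) * Sf i)
          + ENNReal.ofReal (↑m * ((Bb + 1) ^ (m - 1) * (1 / (N + 1)))) * Sc := by
    intro N
    refine (ESTA N).trans ?_
    refine add_le_add ?_ le_rfl
    refine (ESTC N).trans ?_
    refine mul_le_mul_right ?_ _
    exact Finset.prod_le_prod' fun i _ => ESTB N i
  -- pass to the limit
  have hε0 : Filter.Tendsto (fun N : ℕ => ENNReal.ofReal (1 / (N + 1))) Filter.atTop (nhds 0) := by
    have h1 : Filter.Tendsto (fun N : ℕ => (1 : ℝ) / (N + 1)) Filter.atTop (nhds 0) :=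
      tendsto_one_div_add_atTop_nhds_zero_nat
    have := (ENNReal.continuous_ofReal.tendsto 0).comp h1
    simpa [Function.comp_def] using this
  have hterm : Filter.Tendsto (fun N : ℕ =>
      ENNReal.ofReal (C * M) * ∏ i, (R i + ENNReal.ofReal (1 / (N + 1)) * Sf i)
        + ENNReal.ofReal (↑m * ((Bb + 1) ^ (m - 1) * (1 / (N + 1)))) * Sc) Filter.atTop
      (nhds (ENNReal.ofReal (C * M) * ∏ i, R i)) := by
    have hprod : Filter.Tendsto (fun N : ℕ => ∏ i, (R i + ENNReal.ofReal (1 / (N + 1)) * Sf i))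
        Filter.atTop (nhds (∏ i, R i)) := by
      have hfac : ∀ i : Fin m, Filter.Tendsto
          (fun N : ℕ => R i + ENNReal.ofReal (1 / (N + 1)) * Sf i) Filter.atTop (nhds (R i)) := by
        intro i
        have h2 : Filter.Tendsto (fun N : ℕ => ENNReal.ofReal (1 / (N + 1)) * Sf i)
            Filter.atTop (nhds 0) := by
          have := ENNReal.Tendsto.mul_const (b := Sf i) hε0 (Or.inr (hSffin i))
          simpa using this
        have := Filter.Tendsto.add (tendsto_const_nhds (x := R i)) h2
        simpa using this
      -- product over a finite set
      have : ∀ s : Finset (Fin m), Filter.Tendsto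
          (fun N : ℕ => ∏ i ∈ s, (R i + ENNReal.ofReal (1 / (N + 1)) * Sf i))
          Filter.atTop (nhds (∏ i ∈ s, R i)) := by
        intro s
        induction s using Finset.induction_on with
        | empty => simpa using tendsto_const_nhds
        | @insert a s ha ih =>
            have hmul := ENNReal.Tendsto.mul (hfac a) (Or.inr ?fin1) ih (Or.inr ?fin2)
            · simp only [Finset.prod_insert ha]
              exact hmul
            case fin1 => exact (ENNReal.prod_lt_top fun i _ => (hRfin i).lt_top).ne
            case fin2 => exact hRfin a
      exact this Finset.univ
    have herr : Filter.Tendsto (fun N : ℕ =>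
        ENNReal.ofReal (↑m * ((Bb + 1) ^ (m - 1) * (1 / (N + 1)))) * Sc) Filter.atTop (nhds 0) := by
      have hsplit : ∀ N : ℕ, ENNReal.ofReal (↑m * ((Bb + 1) ^ (m - 1) * (1 / (N + 1))))
          = ENNReal.ofReal (↑m * (Bb + 1) ^ (m - 1)) * ENNReal.ofReal (1 / (N + 1)) := by
        intro N
        rw [← ENNReal.ofReal_mul (by positivity)]
        ring_nf
      simp only [hsplit]
      have h3 : Filter.Tendsto (fun N : ℕ =>
          ENNReal.ofReal (↑m * (Bb + 1) ^ (m - 1)) * ENNReal.ofReal (1 / (N + 1)))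
          Filter.atTop (nhds 0) := by
        have := ENNReal.Tendsto.const_mul (a := ENNReal.ofReal (↑m * (Bb + 1) ^ (m - 1))) hε0
          (Or.inr ENNReal.ofReal_ne_top)
        simpa using this
      have := ENNReal.Tendsto.mul_const (b := Sc) h3 (Or.inr hScfin)
      simpa using this
    have hKmul : Filter.Tendsto (fun N : ℕ =>
        ENNReal.ofReal (C * M) * ∏ i, (R i + ENNReal.ofReal (1 / (N + 1)) * Sf i))
        Filter.atTop (nhds (ENNReal.ofReal (C * M) * ∏ i, R i)) := by
      exact ENNReal.Tendsto.const_mul hprod (Or.inr ENNReal.ofReal_ne_top)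
    have := Filter.Tendsto.add hKmul herr
    simpa using this
  exact ge_of_tendsto' hterm hchain
end
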